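/- If G is a chain graph on node set V and C ⊆ V, then the graph α_CMG(G;∅,C) produced by the conditioning algorithm is a chain graph. Consequently, the class of chain graphs with the LWF Markov property is stable under conditioning. -/

import Mathlib

/-!
Common definitions: mixed graphs, walks, sections, colliders, c-separation, and the
marginalization / conditioning / anterial-graph algorithms of Sadeghi,
"Marginalization and conditioning for LWF chain graphs".
-/

namespace LWF

variable {V : Type*} {W : Type*}

/-- A mixed graph: a node set together with three edge relations
(lines `i — j`, arrows `i → j`, arcs `i ↔ j`). -/
structure MixedGraph (V : Type*) where
  nodes : Set V
  line : V → V → Prop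
  arrow : V → V → Prop
  arc : V → V → Prop

namespace MixedGraph

/-- The structural axioms of a (loopless) mixed graph: lines and arcs are symmetric,
all three relations are irreflexive, and edges join nodes of the graph. -/
def IsMixedGraph (G : MixedGraph V) : Prop :=
  (∀ i j, G.line i j → G.line j i) ∧ (∀ i, ¬ G.line i i) ∧
  (∀ i, ¬ G.arrow i i) ∧
  (∀ i j, G.arc i j → G.arc j i) ∧ (∀ i, ¬ G.arc i i) ∧
  (∀ i j, G.line i j → i ∈ G.nodes ∧ j ∈ G.nodes) ∧
  (∀ i j, G.arrow i j → i ∈ G.nodes ∧ j ∈ G.nodes) ∧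
  (∀ i j, G.arc i j → i ∈ G.nodes ∧ j ∈ G.nodes)

/-- `i` and `j` are adjacent: some edge joins them. -/
def adj (G : MixedGraph V) (i j : V) : Prop :=
  G.line i j ∨ G.arrow i j ∨ G.arrow j i ∨ G.arc i j

/-- A single step of a semi-directed walk: a line, or an arrow pointing forwards. -/
def sdStep (G : MixedGraph V) (i j : V) : Prop := G.line i j ∨ G.arrow i j

/-- `i` is an anterior of `j`: there is a (nontrivial) semi-directed walk from `i` to `j`;
by convention a node is not an anterior of itself. -/
def anterior (G : MixedGraph V) (i j : V) : Prop :=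
  i ≠ j ∧ Relation.TransGen G.sdStep i j

/-- The set of anteriors of a node. -/
def ant (G : MixedGraph V) (j : V) : Set V := {i | G.anterior i j}

/-- `ant(C) = (⋃ c ∈ C, ant(c)) \ C` -/
def antSet (G : MixedGraph V) (C : Set V) : Set V := (⋃ c ∈ C, G.ant c) \ C

/-- No semi-directed cycle containing at least one arrow: equivalently, there is no
arrow `a → b` together with a semi-directed walk from `b` back to `a`. -/
def NoArrowSemiDirectedCycle (G : MixedGraph V) : Prop :=
  ∀ a b, G.arrow a b → ¬ Relation.ReflTransGen G.sdStep b a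

/-- chain mixed graph -/
def IsCMG (G : MixedGraph V) : Prop := G.IsMixedGraph ∧ G.NoArrowSemiDirectedCycle

/-- chain graph: a CMG without arcs -/
def IsCG (G : MixedGraph V) : Prop := G.IsCMG ∧ ∀ i j, ¬ G.arc i j

/-- anterial graph: a CMG in which no arc has an endpoint that is an anterior of the
other endpoint -/
def IsAnG (G : MixedGraph V) : Prop :=
  G.IsCMG ∧ ∀ i j, G.arc i j → ¬ G.anterior i j

/-- `p` is a path consisting only of lines, from `a` to `b` (possibly a single node). -/
def lineSection (G : MixedGraph V) (p : List V) (a b : V) : Prop :=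
  p ≠ [] ∧ p.Chain' G.line ∧ p.Nodup ∧ p.head? = some a ∧ p.getLast? = some b

end MixedGraph

/-- The kind of a non-line connecting edge on a walk. -/
inductive Conn : Type
  | fwd   -- an arrow pointing forwards along the walk
  | bwd   -- an arrow pointing backwards along the walk
  | biarc -- an arc

/-- The connecting edge has an arrowhead pointing at the following section. -/
def Conn.headTowardsNext : Conn → Prop
  | .fwd => True
  | .bwd => False
  | .biarc => True

/-- The connecting edge has an arrowhead pointing at the preceding section. -/
def Conn.headTowardsPrev : Conn → Prop
  | .fwd => False
  | .bwd => True
  | .biarc => True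

/-- The connecting edge of kind `c` from `a` to `b` is present in `G`. -/
def MixedGraph.connOK (G : MixedGraph V) : Conn → V → V → Prop
  | .fwd, a, b => G.arrow a b
  | .bwd, a, b => G.arrow b a
  | .biarc, a, b => G.arc a b

/-- A walk in a mixed graph, presented by its (unique) decomposition into sections:
a first section followed by a list of non-line connecting edges, each with the next
section. Each section is a nonempty list of nodes joined by lines. -/
structure MWalk (V : Type*) where
  first : List V
  rest : List (Conn × List V)

namespace MWalk

/-- The list of sections of a walk. -/
def sections (w : MWalk V) : List (List V) := w.first :: w.rest.map Prod.snd

/-- The list of connecting (non-line) edges of a walk. -/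
def conns (w : MWalk V) : List Conn := w.rest.map Prod.fst

/-- The list of all nodes of a walk, in order. -/
def nodes (w : MWalk V) : List V := w.sections.flatten

/-- The inner nodes of a walk: all nodes except the two endpoints. -/
def innerNodes (w : MWalk V) : List V := (w.nodes.drop 1).dropLast

/-- The section with index `k` is a collider section of the walk: it is an inner
section and the connecting edges on both sides have an arrowhead pointing at it. -/
def colliderAt (w : MWalk V) (k : ℕ) : Prop :=
  0 < k ∧ k < w.conns.length ∧
  (∃ c, w.conns[k-1]? = some c ∧ c.headTowardsNext) ∧
  (∃ c, w.conns[k]? = some c ∧ c.headTowardsPrev)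

/-- There is an arrowhead pointing at the endpoint section containing the first node. -/
def headAtStart (w : MWalk V) : Prop :=
  ∃ c, w.conns[0]? = some c ∧ c.headTowardsPrev

/-- There is an arrowhead pointing at the endpoint section containing the last node. -/
def headAtEnd (w : MWalk V) : Prop :=
  ∃ c, w.conns[w.conns.length - 1]? = some c ∧ c.headTowardsNext

/-- The walk is `c`-connecting given `C`: every collider section contains a node of `C`
and no non-collider section contains a node of `C`. -/
def cConnecting (w : MWalk V) (C : Set V) : Prop :=
  (∀ k s, w.sections[k]? = some s → w.colliderAt k → ∃ x ∈ s, x ∈ C) ∧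
  (∀ k s, w.sections[k]? = some s → ¬ w.colliderAt k → ∀ x ∈ s, x ∉ C)

end MWalk

/-- Two walks between the same endpoints are endpoint-identical: one has an arrowhead
pointing at its endpoint section containing the first (resp. last) endpoint exactly when
the other does. -/
def EndpointIdentical (w₁ w₂ : MWalk V) : Prop :=
  (w₁.headAtStart ↔ w₂.headAtStart) ∧ (w₁.headAtEnd ↔ w₂.headAtEnd)

/-- Auxiliary: the tail of a walk is realized in `G`, starting at node `a`
and ending at node `j`. -/
def walkAux (G : MixedGraph V) : V → List (Conn × List V) → V → Prop
  | a, [], j => a = j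
  | a, (c, s) :: rest, j =>
      s ≠ [] ∧ s.Chain' G.line ∧
      (∃ b, s.head? = some b ∧ G.connOK c a b) ∧
      (∃ e, s.getLast? = some e ∧ walkAux G e rest j)

/-- `w` is a walk in `G` between `i` and `j` (read from `i` to `j`). -/
def MWalk.IsWalkFrom (w : MWalk V) (G : MixedGraph V) (i j : V) : Prop :=
  w.first ≠ [] ∧ w.first.Chain' G.line ∧ w.first.head? = some i ∧
  ∃ e, w.first.getLast? = some e ∧ walkAux G e w.rest j

namespace MixedGraph

/-- There is a `c`-connecting walk between `i` and `j` given `C` in `G`. -/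
def cConnect (G : MixedGraph V) (i j : V) (C : Set V) : Prop :=
  ∃ w : MWalk V, w.IsWalkFrom G i j ∧ w.cConnecting C

/-- `A ⊥_c B | C` in `G`. -/
def cSep (G : MixedGraph V) (A B C : Set V) : Prop :=
  ∀ i ∈ A, ∀ j ∈ B, ¬ G.cConnect i j C

/-- `edgeB G i j hi hj`: there is an edge between `i` and `j` in `G` with an arrowhead
at `i` iff `hi = true`, and an arrowhead at `j` iff `hj = true`. -/
def edgeB (G : MixedGraph V) (i j : V) : Bool → Bool → Prop
  | false, false => G.line i j
  | false, true => G.arrow i j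
  | true, false => G.arrow j i
  | true, true => G.arc i j

/-- A graph is maximal if every pair of distinct non-adjacent nodes is c-separated by
some node set. -/
def MaximalCMG (G : MixedGraph V) : Prop :=
  ∀ i ∈ G.nodes, ∀ j ∈ G.nodes, i ≠ j → ¬ G.adj i j →
    ∃ C : Set V, C ⊆ G.nodes ∧ i ∉ C ∧ j ∉ C ∧ ¬ G.cConnect i j C

/-- Delete the nodes in `M` together with all edges incident to them. -/
def deleteNodes (G : MixedGraph V) (M : Set V) : MixedGraph V where
  nodes := G.nodes \ M
  line i j := G.line i j ∧ i ∉ M ∧ j ∉ M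
  arrow i j := G.arrow i j ∧ i ∉ M ∧ j ∉ M
  arc i j := G.arc i j ∧ i ∉ M ∧ j ∉ M

/-! ### the marginalization algorithm -/

/-- Case 9 of step 1 of the marginalization algorithm: a collider trislide
`m → i — ⋯ — t ↔ j` with `m ∈ M` generates the arc `i ↔ j`. -/
def margGen9 (G : MixedGraph V) (M : Set V) (i j : V) : Prop :=
  ∃ m ∈ M, ∃ p t, G.arrow m i ∧ G.lineSection p i t ∧ G.arc t j ∧
    j ∉ p ∧ m ∉ p ∧ j ≠ m

/-- Step 1 of the marginalization algorithm: for every collider trislide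
`m → i — ⋯ — t ← j` (resp. `m → i — ⋯ — t ↔ j`) with endpoint `m ∈ M`, add the arrow
`j → i` (resp. the arc `i ↔ j`). -/
def margStep1 (G : MixedGraph V) (M : Set V) : MixedGraph V where
  nodes := G.nodes
  line := G.line
  arrow a b := G.arrow a b ∨
    ∃ m ∈ M, ∃ p t, G.arrow m b ∧ G.lineSection p b t ∧ G.arrow a t ∧
      a ∉ p ∧ m ∉ p ∧ a ≠ m
  arc a b := G.arc a b ∨ G.margGen9 M a b ∨ G.margGen9 M b a

end MixedGraph

/-- The kind of an edge. -/
inductive EKind : Type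
  | ln  -- a line
  | ar  -- an arrow
  | bi  -- an arc

/-- Step 2 of the marginalization algorithm, as a closure: starting from the edges of
`H`, repeatedly add, for every tripath with inner node `m ∈ M`, the edge given in
Table 1 (cases 1-7), until no new edge can be added. `MargCl H M EKind.ar a b` means:
an arrow from `a` to `b`. -/
inductive MargCl (H : MixedGraph V) (M : Set V) : EKind → V → V → Prop
  | base_ln {i j : V} : H.line i j → MargCl H M EKind.ln i j
  | base_ar {i j : V} : H.arrow i j → MargCl H M EKind.ar i j
  | base_bi {i j : V} : H.arc i j → MargCl H M EKind.bi i j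
  | symm_ln {i j : V} : MargCl H M EKind.ln i j → MargCl H M EKind.ln j i
  | symm_bi {i j : V} : MargCl H M EKind.bi i j → MargCl H M EKind.bi j i
  /-- `i ← m ← j` generates the arrow `j → i` -/
  | r1 {i j m : V} : m ∈ M → i ≠ j → MargCl H M EKind.ar j m →
      MargCl H M EKind.ar m i → MargCl H M EKind.ar j i
  /-- `i ← m — j` generates the arrow `j → i` -/
  | r2 {i j m : V} : m ∈ M → i ≠ j → MargCl H M EKind.ln m j →
      MargCl H M EKind.ar m i → MargCl H M EKind.ar j i
  /-- `i ↔ m — j` generates the arc `i ↔ j` -/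
  | r3 {i j m : V} : m ∈ M → i ≠ j → MargCl H M EKind.bi i m →
      MargCl H M EKind.ln m j → MargCl H M EKind.bi i j
  /-- `i ← m → j` generates the arc `i ↔ j` -/
  | r4 {i j m : V} : m ∈ M → i ≠ j → MargCl H M EKind.ar m i →
      MargCl H M EKind.ar m j → MargCl H M EKind.bi i j
  /-- `i ← m ↔ j` generates the arc `i ↔ j` -/
  | r5 {i j m : V} : m ∈ M → i ≠ j → MargCl H M EKind.ar m i →
      MargCl H M EKind.bi m j → MargCl H M EKind.bi i j
  /-- `i — m ← j` generates the arrow `j → i` -/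
  | r6 {i j m : V} : m ∈ M → i ≠ j → MargCl H M EKind.ln i m →
      MargCl H M EKind.ar j m → MargCl H M EKind.ar j i
  /-- `i — m — j` generates the line `i — j` -/
  | r7 {i j m : V} : m ∈ M → i ≠ j → MargCl H M EKind.ln i m →
      MargCl H M EKind.ln m j → MargCl H M EKind.ln i j

namespace MixedGraph

/-- The graph obtained after steps 1 and 2 of the marginalization algorithm. -/
def margCore (G : MixedGraph V) (M : Set V) : MixedGraph V where
  nodes := G.nodes
  line := MargCl (G.margStep1 M) M EKind.ln
  arrow := MargCl (G.margStep1 M) M EKind.ar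
  arc := MargCl (G.margStep1 M) M EKind.bi

/-- The marginalization algorithm `α_CMG(G; M, ∅)`. -/
def alphaMarg (G : MixedGraph V) (M : Set V) : MixedGraph V :=
  (G.margCore M).deleteNodes M

/-! ### the conditioning algorithm -/

/-- Step 2, case 4, of the conditioning algorithm: a collider trislide
`s ↔ b — ⋯ — t ← a` with `s ∈ S` generates the arrow `a → b`. -/
def condGenArrow (G : MixedGraph V) (S : Set V) (a b : V) : Prop :=
  ∃ s ∈ S, ∃ p t, G.arc s b ∧ G.lineSection p b t ∧ G.arrow a t ∧
    a ∉ p ∧ s ∉ p ∧ a ≠ s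

/-- Step 2, case 5, of the conditioning algorithm: a collider trislide
`s ↔ i — ⋯ — t ↔ j` with `s ∈ S` generates the arc `i ↔ j`. -/
def condGenArc (G : MixedGraph V) (S : Set V) (i j : V) : Prop :=
  ∃ s ∈ S, ∃ p t, G.arc s i ∧ G.lineSection p i t ∧ G.arc t j ∧
    j ∉ p ∧ s ∉ p ∧ j ≠ s

/-- The graph obtained after step 2 of the conditioning algorithm. -/
def condStep2 (G : MixedGraph V) (S : Set V) : MixedGraph V where
  nodes := G.nodes
  line := G.line
  arrow a b := G.arrow a b ∨ G.condGenArrow S a b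
  arc a b := G.arc a b ∨ G.condGenArc S a b ∨ G.condGenArc S b a

end MixedGraph

/-- Step 3 of the conditioning algorithm, as a closure: starting from the edges of `H`,
repeatedly add, for every collider trislide whose inner section has all its nodes in
`S`, the indicated edge; lines generated in this step are not used to form new
sections (sections are formed from the lines of `H` only). -/
inductive CondCl (H : MixedGraph V) (S : Set V) : EKind → V → V → Prop
  | base_ln {i j : V} : H.line i j → CondCl H S EKind.ln i j
  | base_ar {i j : V} : H.arrow i j → CondCl H S EKind.ar i j
  | base_bi {i j : V} : H.arc i j → CondCl H S EKind.bi i j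
  | symm_ln {i j : V} : CondCl H S EKind.ln i j → CondCl H S EKind.ln j i
  | symm_bi {i j : V} : CondCl H S EKind.bi i j → CondCl H S EKind.bi j i
  /-- `i → s — ⋯ — s ← j` generates the line `i — j` -/
  | rLL {i j a b : V} {p : List V} :
      H.lineSection p a b → (∀ x ∈ p, x ∈ S) → i ≠ j → i ∉ p → j ∉ p →
      CondCl H S EKind.ar i a → CondCl H S EKind.ar j b → CondCl H S EKind.ln i j
  /-- `i ↔ s — ⋯ — s ← j` generates the arrow `j → i` -/
  | rBL {i j a b : V} {p : List V} :
      H.lineSection p a b → (∀ x ∈ p, x ∈ S) → i ≠ j → i ∉ p → j ∉ p →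
      CondCl H S EKind.bi i a → CondCl H S EKind.ar j b → CondCl H S EKind.ar j i
  /-- `i ↔ s — ⋯ — s ↔ j` generates the arc `i ↔ j` -/
  | rBB {i j a b : V} {p : List V} :
      H.lineSection p a b → (∀ x ∈ p, x ∈ S) → i ≠ j → i ∉ p → j ∉ p →
      CondCl H S EKind.bi i a → CondCl H S EKind.bi j b → CondCl H S EKind.bi i j

namespace MixedGraph

/-- Step 4 of the conditioning algorithm: remove all arrowheads pointing at members of
`S`; arrows pointing at `S` become lines, and arcs with an endpoint in `S` become
arrows pointing away from that endpoint (arcs with both endpoints in `S` become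
lines). -/
def removeHeads (G : MixedGraph V) (S : Set V) : MixedGraph V where
  nodes := G.nodes
  line a b := G.line a b ∨ (G.arrow a b ∧ b ∈ S) ∨ (G.arrow b a ∧ a ∈ S) ∨
    (G.arc a b ∧ a ∈ S ∧ b ∈ S)
  arrow a b := (G.arrow a b ∧ b ∉ S) ∨ (G.arc a b ∧ a ∈ S ∧ b ∉ S)
  arc a b := G.arc a b ∧ a ∉ S ∧ b ∉ S

/-- The graph obtained after steps 1–3 of the conditioning algorithm. -/
def condCore (G : MixedGraph V) (C : Set V) : MixedGraph V where
  nodes := G.nodes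
  line := CondCl (G.condStep2 (C ∪ G.antSet C)) (C ∪ G.antSet C) EKind.ln
  arrow := CondCl (G.condStep2 (C ∪ G.antSet C)) (C ∪ G.antSet C) EKind.ar
  arc := CondCl (G.condStep2 (C ∪ G.antSet C)) (C ∪ G.antSet C) EKind.bi

/-- The conditioning algorithm `α_CMG(G; ∅, C)`. -/
def alphaCond (G : MixedGraph V) (C : Set V) : MixedGraph V :=
  ((G.condCore C).removeHeads (C ∪ G.antSet C)).deleteNodes C

/-- Simultaneous marginalization and conditioning:
`α_CMG(G; M, C) = α_CMG(α_CMG(G; M, ∅); ∅, C)`. -/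
def alphaCMG (G : MixedGraph V) (M C : Set V) : MixedGraph V :=
  (G.alphaMarg M).alphaCond C

/-! ### anterial graphs -/

/-- Step 3 of the anterial-graph algorithm: a trislide `a → t — ⋯ — b ↔ k` with
`k ∈ ant(b)` generates the arrow `a → b`. -/
def angGen3Arrow (H : MixedGraph V) (a b : V) : Prop :=
  ∃ p t k, H.arrow a t ∧ H.lineSection p t b ∧ H.arc b k ∧ H.anterior k b ∧
    a ∉ p ∧ k ∉ p ∧ a ≠ k

/-- Step 3 of the anterial-graph algorithm: a trislide `a ↔ t — ⋯ — b ↔ k` with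
`k ∈ ant(b)` generates the arc `a ↔ b`. -/
def angGen3Arc (H : MixedGraph V) (a b : V) : Prop :=
  ∃ p t k, H.arc a t ∧ H.lineSection p t b ∧ H.arc b k ∧ H.anterior k b ∧
    a ∉ p ∧ k ∉ p ∧ a ≠ k

/-- The graph obtained after step 3 of the anterial-graph algorithm applied to `H`. -/
def angStep3 (H : MixedGraph V) : MixedGraph V where
  nodes := H.nodes
  line := H.line
  arrow a b := H.arrow a b ∨ H.angGen3Arrow a b
  arc a b := H.arc a b ∨ H.angGen3Arc a b ∨ H.angGen3Arc b a

end MixedGraph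

/-- Step 4 of the anterial-graph algorithm, as a closure: repeatedly add, for every
trislide `j → k₁ — ⋯ — k_m ↔ i` (resp. `j ↔ k₁ — ⋯ — k_m ↔ i`) with some `k_r ∈ ant(i)`,
the arrow `j → i` (resp. the arc `j ↔ i`). -/
inductive AnGCl (H : MixedGraph V) : EKind → V → V → Prop
  | base_ln {i j : V} : H.line i j → AnGCl H EKind.ln i j
  | base_ar {i j : V} : H.arrow i j → AnGCl H EKind.ar i j
  | base_bi {i j : V} : H.arc i j → AnGCl H EKind.bi i j
  | symm_bi {i j : V} : AnGCl H EKind.bi i j → AnGCl H EKind.bi j i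
  /-- `j → k₁ — ⋯ — k_m ↔ i` with some `k_r ∈ ant(i)` generates the arrow `j → i` -/
  | r_ar {i j a b : V} {p : List V} :
      H.lineSection p a b → (∃ r ∈ p, H.anterior r i) → j ∉ p → i ∉ p → j ≠ i →
      AnGCl H EKind.ar j a → AnGCl H EKind.bi b i → AnGCl H EKind.ar j i
  /-- `j ↔ k₁ — ⋯ — k_m ↔ i` with some `k_r ∈ ant(i)` generates the arc `j ↔ i` -/
  | r_bi {i j a b : V} {p : List V} :
      H.lineSection p a b → (∃ r ∈ p, H.anterior r i) → j ∉ p → i ∉ p → j ≠ i →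
      AnGCl H EKind.bi j a → AnGCl H EKind.bi b i → AnGCl H EKind.bi j i

namespace MixedGraph

/-- The graph obtained after step 4 of the anterial-graph algorithm applied to `H`. -/
def angStep4Graph (H : MixedGraph V) : MixedGraph V where
  nodes := H.nodes
  line := AnGCl H EKind.ln
  arrow := AnGCl H EKind.ar
  arc := AnGCl H EKind.bi

/-- Step 5 of the anterial-graph algorithm: replace every arc `a ↔ b` with `a ∈ ant(b)`
by the arrow `a → b`, and by the line `a — b` if also `b ∈ ant(a)`. -/
def angStep5 (K : MixedGraph V) : MixedGraph V where
  nodes := K.nodes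
  line a b := K.line a b ∨ (K.arc a b ∧ K.anterior a b ∧ K.anterior b a)
  arrow a b := K.arrow a b ∨ (K.arc a b ∧ K.anterior a b ∧ ¬ K.anterior b a)
  arc a b := K.arc a b ∧ ¬ K.anterior a b ∧ ¬ K.anterior b a

/-- The operation `α_{CMG.AnG}`: steps 3, 4, and 5 of the anterial-graph algorithm. -/
def cmgToAnG (H : MixedGraph V) : MixedGraph V :=
  H.angStep3.angStep4Graph.angStep5

/-- The anterial-graph algorithm `α_AnG(G; M, C) = α_{CMG.AnG}(α_CMG(G; M, C))`. -/
def alphaAnG (G : MixedGraph V) (M C : Set V) : MixedGraph V :=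
  (G.alphaCMG M C).cmgToAnG

/-- A subprimitive inducing walk from `j` to `i` in `G`: a walk from `j` to `i` all of
whose (inner) sections are collider and have all their nodes in `ant(i)`. -/
def SubprimFrom (G : MixedGraph V) (w : MWalk V) (j i : V) : Prop :=
  w.IsWalkFrom G j i ∧
  (∀ k, 0 < k → k < w.conns.length → w.colliderAt k) ∧
  (∀ k s, 0 < k → k < w.conns.length → w.sections[k]? = some s →
    ∀ x ∈ s, G.anterior x i)

end MixedGraph

/-- The image of a mixed graph under a map of node sets. -/
def MixedGraph.gmap (f : V → W) (G : MixedGraph V) : MixedGraph W where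
  nodes := f '' G.nodes
  line a b := ∃ i j, G.line i j ∧ a = f i ∧ b = f j
  arrow a b := ∃ i j, G.arrow i j ∧ a = f i ∧ b = f j
  arc a b := ∃ i j, G.arc i j ∧ a = f i ∧ b = f j

end LWF

namespace LWF

variable {V : Type*}

section Aux

open MixedGraph Relation Classical

variable (H : MixedGraph V) (D : Set V)

/-- connecting edge of boolean direction: `true` = forward arrow. -/
def connE (d : Bool) (a v : V) : Prop := if d then H.arrow a v else H.arrow v a

/-- line reachability (unrestricted). -/
def LSt : V → V → Prop := Relation.ReflTransGen H.line

/-- line reachability avoiding `D`. -/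
def LA (a b : V) : Prop :=
  a ∉ D ∧ Relation.ReflTransGen (fun x y => H.line x y ∧ y ∉ D) a b

/-- line reachability through some node of `D`. -/
def LC (a b : V) : Prop := ∃ c ∈ D, LSt H a c ∧ LSt H c b

/-- suffix of a c-connecting walk, from a node entered with direction `d` to `j`. -/
inductive Suf (j : V) : Bool → V → Prop
  | done (d v) : LA H D v j → Suf j d v
  | stepN {d d' : Bool} {v b v' : V} : ¬(d = true ∧ d' = false) → LA H D v b →
      connE H d' b v' → Suf j d' v' → Suf j d v
  | stepC {v b v' : V} : LC H D v b → H.arrow v' b → Suf j false v' → Suf j true v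

/-- prefix of a c-connecting walk from `i`, ending with a connection of direction `d`
arriving at a node. -/
inductive Reach (i : V) : V → Bool → Prop
  | start {a v : V} {d : Bool} : LA H D i a → connE H d a v → Reach i v d
  | stepN {a b v : V} {d d' : Bool} : Reach i a d → ¬(d = true ∧ d' = false) →
      LA H D a b → connE H d' b v → Reach i v d'
  | stepC {a b v : V} : Reach i a true → LC H D a b → H.arrow v b → Reach i v false

/-- existence of a c-connecting walk, in prefix-accumulation form. -/
def AltCon (i j : V) : Prop :=
  LA H D i j ∨ ∃ v d, Reach H D i v d ∧ LA H D v j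

variable {H D}

lemma LA.notinD {a b : V} (h : LA H D a b) : b ∉ D := by
  obtain ⟨ha, h⟩ := h
  induction h with
  | refl => exact ha
  | tail _ h2 _ => exact h2.2

lemma LA.lst {a b : V} (h : LA H D a b) : LSt H a b := by
  refine ReflTransGen.mono ?_ _ _ h.2
  exact fun x y hxy => hxy.1

lemma LA.trans {a b c : V} (h : LA H D a b) (h' : LA H D b c) : LA H D a c :=
  ⟨h.1, h.2.trans h'.2⟩

lemma LA.refl {a : V} (ha : a ∉ D) : LA H D a a := ⟨ha, ReflTransGen.refl⟩

lemma LA.tail {a b c : V} (h : LA H D a b) (hbc : H.line b c) (hc : c ∉ D) :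
    LA H D a c := ⟨h.1, h.2.tail ⟨hbc, hc⟩⟩

lemma suf_of_reach {i j v : V} {d : Bool} (h : Reach H D i v d) (hs : Suf H D j d v) :
    Suf H D j false i := by
  induction h with
  | start hla hc => exact Suf.stepN (by simp) hla hc hs
  | stepN _ hn hla hc ih => exact ih (Suf.stepN hn hla hc hs)
  | stepC _ hlc har ih => exact ih (Suf.stepC hlc har hs)

lemma suf_iff_altCon {i j : V} : Suf H D j false i ↔ AltCon H D i j := by
  constructor
  · intro h
    have key : ∀ (d : Bool) (v : V), Suf H D j d v →
        ((v = i ∧ d = false) ∨ Reach H D i v d) → AltCon H D i j := by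
      intro d v h
      induction h with
      | done d v hla =>
        rintro (⟨rfl, rfl⟩ | hr)
        · exact Or.inl hla
        · exact Or.inr ⟨_, _, hr, hla⟩
      | @stepN d d' v b v' hn hla hc _ ih =>
        rintro (⟨rfl, rfl⟩ | hr)
        · exact ih (Or.inr (Reach.start hla hc))
        · exact ih (Or.inr (Reach.stepN hr hn hla hc))
      | @stepC v b v' hlc har _ ih =>
        rintro (⟨rfl, h'⟩ | hr)
        · exact absurd h' (by simp)
        · exact ih (Or.inr (Reach.stepC hr hlc har))
    exact key false i h (Or.inl ⟨rfl, rfl⟩)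
  · rintro (h | ⟨v, d, hr, hla⟩)
    · exact Suf.done _ _ h
    · exact suf_of_reach hr (Suf.done _ _ hla)

end Aux

section Lists

open MixedGraph Relation

variable {H : MixedGraph V} {D : Set V} {r : V → V → Prop}

lemma chain'_lst_mem : ∀ {s : List V} {v e : V}, s.Chain' r → s.head? = some v →
    s.getLast? = some e → ∀ x ∈ s, Relation.ReflTransGen r v x ∧ Relation.ReflTransGen r x e := by
  intro s
  induction s with
  | nil => intro v e _ h; simp at h
  | cons a t ih =>
    intro v e hch hh hl x hx
    simp only [List.head?_cons, Option.some.injEq] at hh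
    subst hh
    match t, hx with
    | [], hx =>
      simp only [List.getLast?_singleton, Option.some.injEq] at hl
      subst hl
      simp only [List.mem_singleton] at hx
      subst hx
      exact ⟨ReflTransGen.refl, ReflTransGen.refl⟩
    | b :: t, hx =>
      simp only [List.Chain', List.isChain_cons_cons] at hch
      rw [List.getLast?_cons_cons] at hl
      have ih' := ih (v := b) (e := e) hch.2 rfl hl
      rcases List.mem_cons.1 hx with rfl | hx
      · exact ⟨ReflTransGen.refl,
          (ReflTransGen.single hch.1).trans (ih' b List.mem_cons_self).2⟩
      · have := ih' x hx
        exact ⟨(ReflTransGen.single hch.1).trans this.1, this.2⟩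

lemma chain'_and_pred : ∀ {s : List V} {p : V → Prop}, s.Chain' r → (∀ x ∈ s, p x) →
    s.Chain' (fun a b => r a b ∧ p b) := by
  intro s
  induction s with
  | nil => intro p _ _; exact List.isChain_nil
  | cons a t ih =>
    intro p hch hp
    simp only [List.Chain', List.isChain_cons] at hch ⊢
    refine ⟨fun y hy => ⟨hch.1 y hy, hp y (List.mem_cons_of_mem _ (List.mem_of_mem_head? hy))⟩,
      ih hch.2 fun x hx => hp x (List.mem_cons_of_mem _ hx)⟩

lemma chainLA {s : List V} {v e : V} (hch : s.Chain' H.line) (hh : s.head? = some v)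
    (hl : s.getLast? = some e) (hD : ∀ x ∈ s, x ∉ D) : LA H D v e := by
  refine ⟨hD v (List.mem_of_mem_head? hh), ?_⟩
  exact (chain'_lst_mem (chain'_and_pred hch hD) hh hl e
    (List.mem_of_mem_getLast? hl)).1

lemma chainLC {s : List V} {v e x : V} (hch : s.Chain' H.line) (hh : s.head? = some v)
    (hl : s.getLast? = some e) (hx : x ∈ s) (hxD : x ∈ D) : LC H D v e := by
  have := chain'_lst_mem hch hh hl x hx
  exact ⟨x, hxD, this.1, this.2⟩

lemma list_snoc_chain {s : List V} {c y : V} (hch : s.Chain' r) (hl : s.getLast? = some c)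
    (hy : r c y) : (s ++ [y]).Chain' r ∧ (s ++ [y]).head? = s.head? ∧
      (s ++ [y]).getLast? = some y := by
  have hne : s ≠ [] := by rintro rfl; simp at hl
  refine ⟨?_, ?_, List.getLast?_concat⟩
  · simp only [List.Chain', List.isChain_append]
    refine ⟨hch, List.isChain_singleton _, ?_⟩
    intro x hx z hz
    simp only [List.head?_cons, Option.mem_def, Option.some.injEq] at hz
    rw [hl] at hx
    simp only [Option.mem_def, Option.some.injEq] at hx
    subst hx; subst hz; exact hy
  · rcases s with _ | ⟨a, t⟩
    · simp at hl
    · simp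

lemma rtg_toList_from {c e : V} (h : Relation.ReflTransGen r c e) :
    ∀ (s : List V), s ≠ [] → s.Chain' r → s.getLast? = some c →
      ∃ s', s' ≠ [] ∧ s'.Chain' r ∧ s'.head? = s.head? ∧ s'.getLast? = some e ∧
        ∀ x ∈ s, x ∈ s' := by
  induction h with
  | refl => intro s hne hch hl; exact ⟨s, hne, hch, rfl, hl, fun x hx => hx⟩
  | @tail b y _ hby ih =>
    intro s hne hch hl
    obtain ⟨s', hne', hch', hh', hl', hsub⟩ := ih s hne hch hl
    have h2 := list_snoc_chain hch' hl' hby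
    refine ⟨s' ++ [y], by simp, h2.1, by rw [h2.2.1, hh'], h2.2.2,
      fun x hx => List.mem_append_left _ (hsub x hx)⟩

lemma rtg_toList {v e : V} (h : Relation.ReflTransGen r v e) :
    ∃ s : List V, s ≠ [] ∧ s.Chain' r ∧ s.head? = some v ∧ s.getLast? = some e := by
  obtain ⟨s, hne, hch, hh, hl, _⟩ := rtg_toList_from h [v] (by simp)
    (List.isChain_singleton _) (by simp)
  exact ⟨s, hne, hch, by rw [hh]; simp, hl⟩

lemma chain'_pred_all : ∀ {s : List V} {p : V → Prop} {v : V},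
    s.Chain' (fun a b => r a b ∧ p b) → s.head? = some v → p v → ∀ x ∈ s, p x := by
  intro s
  induction s with
  | nil => simp
  | cons a t ih =>
    intro p v hch hh hv x hx
    simp only [List.head?_cons, Option.some.injEq] at hh
    subst hh
    rcases List.mem_cons.1 hx with rfl | hx
    · exact hv
    · rcases t with _ | ⟨b, t⟩
      · simp at hx
      · simp only [List.Chain', List.isChain_cons_cons] at hch
        exact ih (v := b) hch.2 rfl hch.1.2 x hx

lemma LA_toList {v e : V} (h : LA H D v e) :
    ∃ s : List V, s ≠ [] ∧ s.Chain' H.line ∧ s.head? = some v ∧ s.getLast? = some e ∧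
      ∀ x ∈ s, x ∉ D := by
  obtain ⟨s, hne, hch, hh, hl⟩ := rtg_toList h.2
  exact ⟨s, hne, hch.imp (fun _ _ hab => hab.1), hh, hl, chain'_pred_all hch hh h.1⟩

lemma LC_toList {v e : V} (h : LC H D v e) :
    ∃ s : List V, s ≠ [] ∧ s.Chain' H.line ∧ s.head? = some v ∧ s.getLast? = some e ∧
      ∃ x ∈ s, x ∈ D := by
  obtain ⟨c, hcD, h1, h2⟩ := h
  obtain ⟨s1, hne1, hch1, hh1, hl1⟩ := rtg_toList h1
  obtain ⟨s, hne, hch, hh, hl, hsub⟩ := rtg_toList_from h2 s1 hne1 hch1 hl1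
  exact ⟨s, hne, hch, by rw [hh, hh1], hl,
    ⟨c, hsub c (List.mem_of_mem_getLast? hl1), hcD⟩⟩

end Lists

section WalkEquiv

open MixedGraph Relation

variable {H : MixedGraph V} {D : Set V}

/-- boolean direction of a connection (`biarc` counts as having a forward head). -/
def Conn.kind : Conn → Bool
  | Conn.fwd => true
  | Conn.bwd => false
  | Conn.biarc => true

def toConn : Bool → Conn
  | true => Conn.fwd
  | false => Conn.bwd

/-- collider condition for section `k`, with a virtual entry direction `d` for section 0. -/
def CAE (w : MWalk V) (d : Bool) (k : ℕ) : Prop :=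
  if k = 0 then d = true ∧ ∃ c, w.conns[0]? = some c ∧ c.headTowardsPrev
  else w.colliderAt k

/-- c-connectivity conditions with a virtual entry direction for the first section. -/
def CCE (w : MWalk V) (D : Set V) (d : Bool) : Prop :=
  ∀ k s, w.sections[k]? = some s →
    (CAE w d k → ∃ x ∈ s, x ∈ D) ∧ (¬ CAE w d k → ∀ x ∈ s, x ∉ D)

lemma kind_eq_true_iff (c : Conn) : c.kind = true ↔ c.headTowardsNext := by
  cases c <;> simp [Conn.kind, Conn.headTowardsNext]

lemma kind_eq_false_iff (c : Conn) (hc : c ≠ Conn.biarc) :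
    c.kind = false ↔ c.headTowardsPrev := by
  cases c <;> simp_all [Conn.kind, Conn.headTowardsPrev]

lemma cae_false_iff (w : MWalk V) (k : ℕ) : CAE w false k ↔ w.colliderAt k := by
  unfold CAE
  split
  · subst ‹k = 0›
    simp only [Bool.false_eq_true, false_and, false_iff]
    intro hcoll
    exact absurd hcoll.1 (by omega)
  · rfl

lemma cConnecting_iff_cce (w : MWalk V) : w.cConnecting D ↔ CCE w D false := by
  constructor
  · intro ⟨h1, h2⟩ k s hks
    rw [cae_false_iff]
    exact ⟨h1 k s hks, h2 k s hks⟩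
  · intro h
    constructor
    · intro k s hks hcoll
      exact (h k s hks).1 ((cae_false_iff w k).2 hcoll)
    · intro k s hks hcoll
      exact (h k s hks).2 (by rw [cae_false_iff]; exact hcoll)

lemma sections_cons (f s : List V) (c : Conn) (rr : List (Conn × List V)) :
    (MWalk.mk f ((c, s) :: rr)).sections = f :: (MWalk.mk s rr).sections := by
  simp [MWalk.sections]

lemma conns_cons (f s : List V) (c : Conn) (rr : List (Conn × List V)) :
    (MWalk.mk f ((c, s) :: rr)).conns = c :: (MWalk.mk s rr).conns := by
  simp [MWalk.conns]

lemma colliderAt_succ (f s : List V) (c : Conn) (rr : List (Conn × List V)) (k : ℕ) :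
    (MWalk.mk f ((c, s) :: rr)).colliderAt (k + 1) ↔ CAE (MWalk.mk s rr) c.kind k := by
  unfold MWalk.colliderAt CAE
  rw [conns_cons]
  simp only [Nat.add_sub_cancel]
  rcases Nat.eq_zero_or_pos k with rfl | hk
  · simp only [if_pos rfl]
    constructor
    · rintro ⟨-, hlen, ⟨c₀, hc₀, hnext⟩, h2⟩
      simp only [List.getElem?_cons_zero, Option.some.injEq] at hc₀
      subst hc₀
      exact ⟨(kind_eq_true_iff c).2 hnext, by simpa using h2⟩
    · rintro ⟨hkind, c₁, hc₁, hprev⟩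
      have hlen : 0 < (MWalk.mk s rr).conns.length := by
        by_contra hl
        rw [List.getElem?_eq_none (by omega)] at hc₁
        simp at hc₁
      exact ⟨Nat.zero_lt_one, by simp; omega, ⟨c, by simp, (kind_eq_true_iff c).1 hkind⟩,
        ⟨c₁, by simpa using hc₁, hprev⟩⟩
  · obtain ⟨m, rfl⟩ : ∃ m, k = m + 1 := ⟨k - 1, by omega⟩
    rw [if_neg (by omega)]
    unfold MWalk.colliderAt
    simp only [Nat.add_sub_cancel, List.getElem?_cons_succ, List.length_cons]
    constructor
    · rintro ⟨-, hlen, h1, h2⟩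
      exact ⟨by omega, by omega, h1, h2⟩
    · rintro ⟨-, hlen, h1, h2⟩
      exact ⟨by omega, by omega, h1, h2⟩

lemma cae_zero (f s : List V) (c : Conn) (rr : List (Conn × List V)) (d : Bool) :
    CAE (MWalk.mk f ((c, s) :: rr)) d 0 ↔ (d = true ∧ c.headTowardsPrev) := by
  unfold CAE
  rw [if_pos rfl, conns_cons]
  simp

lemma cce_shift {f s : List V} {c : Conn} {rr : List (Conn × List V)} {d : Bool} :
    CCE (MWalk.mk f ((c, s) :: rr)) D d ↔
      (((d = true ∧ c.headTowardsPrev) → ∃ x ∈ f, x ∈ D) ∧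
       (¬(d = true ∧ c.headTowardsPrev) → ∀ x ∈ f, x ∉ D)) ∧
      CCE (MWalk.mk s rr) D c.kind := by
  constructor
  · intro h
    refine ⟨?_, ?_⟩
    · have h0 := h 0 f (by rw [sections_cons]; simp)
      rw [cae_zero] at h0
      exact h0
    · intro k s' hks
      have hk := h (k + 1) s' (by rw [sections_cons]; simpa using hks)
      have hcae : CAE (MWalk.mk f ((c, s) :: rr)) d (k + 1) ↔ CAE (MWalk.mk s rr) c.kind k := by
        unfold CAE
        rw [if_neg (by omega)]
        exact colliderAt_succ f s c rr k
      rw [hcae] at hk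
      exact hk
  · rintro ⟨h0, hrest⟩ k s' hks
    rcases k with _ | k
    · rw [sections_cons] at hks
      simp only [List.getElem?_cons_zero, Option.some.injEq] at hks
      subst hks
      rw [cae_zero]
      exact h0
    · rw [sections_cons] at hks
      simp only [List.getElem?_cons_succ] at hks
      have hcae : CAE (MWalk.mk f ((c, s) :: rr)) d (k + 1) ↔ CAE (MWalk.mk s rr) c.kind k := by
        unfold CAE
        rw [if_neg (by omega)]
        exact colliderAt_succ f s c rr k
      rw [hcae]
      exact hrest k s' hks

lemma connOK_toConn (d : Bool) (a b : V) : H.connOK (toConn d) a b ↔ connE H d a b := by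
  cases d <;> simp [toConn, MixedGraph.connOK, connE]

lemma toConn_kind (d : Bool) : (toConn d).kind = d := by cases d <;> rfl

lemma toConn_prev (d : Bool) : (toConn d).headTowardsPrev ↔ d = false := by
  cases d <;> simp [toConn, Conn.headTowardsPrev]

lemma walkAux_suf (hna : ∀ a b, ¬ H.arc a b) (j : V) :
    ∀ (rr : List (Conn × List V)) (d : Bool) (f : List V) (v : V), f ≠ [] →
      f.Chain' H.line → f.head? = some v →
      (∃ e, f.getLast? = some e ∧ walkAux H e rr j) →
      CCE (MWalk.mk f rr) D d → Suf H D j d v := by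
  intro rr
  induction rr with
  | nil =>
    rintro d f v hne hch hh ⟨e, hl, haux⟩ hcce
    have he : e = j := haux
    subst he
    have h0 := hcce 0 f (by simp [MWalk.sections])
    have hnc : ¬ CAE (MWalk.mk f []) d 0 := by
      unfold CAE
      rw [if_pos rfl]
      rintro ⟨-, c, hc, -⟩
      simp [MWalk.conns] at hc
    exact Suf.done _ _ (chainLA hch hh hl (h0.2 hnc))
  | cons p rr ih =>
    obtain ⟨c, s⟩ := p
    rintro d f v hne hch hh ⟨e, hl, haux⟩ hcce
    obtain ⟨hsne, hsch, ⟨b, hbh, hconn⟩, ⟨e', he', haux'⟩⟩ := haux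
    rw [cce_shift] at hcce
    have hsuf : Suf H D j c.kind b :=
      ih c.kind s b hsne hsch hbh ⟨e', he', haux'⟩ hcce.2
    have hcne : c ≠ Conn.biarc := by
      rintro rfl
      exact hna e b hconn
    have hconn' : connE H c.kind e b := by
      cases c
      · exact hconn
      · exact hconn
      · exact absurd rfl hcne
    by_cases hcoll : d = true ∧ c.headTowardsPrev
    · obtain ⟨x, hxf, hxD⟩ := hcce.1.1 hcoll
      have hlc : LC H D v e := chainLC hch hh hl hxf hxD
      have hkind : c.kind = false := (kind_eq_false_iff c hcne).2 hcoll.2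
      rw [hkind] at hsuf hconn'
      have harr : H.arrow b e := hconn'
      rw [hcoll.1]
      exact Suf.stepC hlc harr hsuf
    · have hla : LA H D v e := chainLA hch hh hl (hcce.1.2 hcoll)
      refine Suf.stepN ?_ hla hconn' hsuf
      rintro ⟨hd, hk⟩
      exact hcoll ⟨hd, ((kind_eq_false_iff c hcne).1 hk)⟩

lemma suf_walkAux (j : V) :
    ∀ {d : Bool} {v : V}, Suf H D j d v →
      ∃ (f : List V) (rr : List (Conn × List V)), f ≠ [] ∧ f.Chain' H.line ∧
        f.head? = some v ∧ (∃ e, f.getLast? = some e ∧ walkAux H e rr j) ∧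
        CCE (MWalk.mk f rr) D d := by
  intro d v h
  induction h with
  | done d v hla =>
    obtain ⟨s, hne, hch, hh, hl, hD⟩ := LA_toList hla
    refine ⟨s, [], hne, hch, hh, ⟨j, hl, rfl⟩, ?_⟩
    intro k s' hks
    rcases k with _ | k
    · simp only [MWalk.sections, List.map_nil, List.getElem?_cons_zero,
        Option.some.injEq] at hks
      subst hks
      constructor
      · rintro hcae
        unfold CAE at hcae
        rw [if_pos rfl] at hcae
        obtain ⟨-, c, hc, -⟩ := hcae
        simp [MWalk.conns] at hc
      · intro _; exact hD
    · simp [MWalk.sections] at hks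
  | @stepN d d' vv b v' hn hla hc _ ih =>
    obtain ⟨f', rr', hne', hch', hh', ⟨e', hl', haux'⟩, hcce'⟩ := ih
    obtain ⟨s, hne, hch, hh, hl, hD⟩ := LA_toList hla
    refine ⟨s, (toConn d', f') :: rr', hne, hch, hh,
      ⟨b, hl, hne', hch', ⟨v', hh', (connOK_toConn d' b v').2 hc⟩, ⟨e', hl', haux'⟩⟩, ?_⟩
    rw [cce_shift]
    refine ⟨⟨?_, fun _ => hD⟩, by rw [toConn_kind]; exact hcce'⟩
    rintro ⟨hd, hprev⟩
    exact absurd ⟨hd, (toConn_prev d').1 hprev⟩ hn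
  | @stepC vv b v' hlc harr _ ih =>
    obtain ⟨f', rr', hne', hch', hh', ⟨e', hl', haux'⟩, hcce'⟩ := ih
    obtain ⟨s, hne, hch, hh, hl, x, hxs, hxD⟩ := LC_toList hlc
    refine ⟨s, (toConn false, f') :: rr', hne, hch, hh,
      ⟨b, hl, hne', hch', ⟨v', hh', (connOK_toConn false b v').2 harr⟩, ⟨e', hl', haux'⟩⟩, ?_⟩
    rw [cce_shift]
    refine ⟨⟨fun _ => ⟨x, hxs, hxD⟩, ?_⟩, by rw [toConn_kind]; exact hcce'⟩
    intro hnc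
    exact absurd ⟨rfl, by simp [toConn, Conn.headTowardsPrev]⟩ hnc

theorem cConnect_iff_suf (hna : ∀ a b, ¬ H.arc a b) (i j : V) :
    H.cConnect i j D ↔ Suf H D j false i := by
  constructor
  · rintro ⟨w, ⟨hne, hch, hh, e, hl, haux⟩, hconn⟩
    obtain ⟨f, rr⟩ := w
    exact walkAux_suf hna j rr false f i hne hch hh ⟨e, hl, haux⟩
      ((cConnecting_iff_cce _).1 hconn)
  · intro h
    obtain ⟨f, rr, hne, hch, hh, ⟨e, hl, haux⟩, hcce⟩ := suf_walkAux j h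
    exact ⟨MWalk.mk f rr, ⟨hne, hch, hh, e, hl, haux⟩, (cConnecting_iff_cce _).2 hcce⟩

end WalkEquiv

section Core

open MixedGraph Relation

variable {G : MixedGraph V} {C C₁ : Set V}

/-- the conditioning set together with its anteriors. -/
def Sset (G : MixedGraph V) (C : Set V) : Set V := C ∪ G.antSet C

lemma MixedGraph.IsCG.line_symm (hG : G.IsCG) : ∀ {a b : V}, G.line a b → G.line b a :=
  fun h => hG.1.1.1 _ _ h

lemma MixedGraph.IsCG.line_irrefl (hG : G.IsCG) (a : V) : ¬ G.line a a := hG.1.1.2.1 a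

lemma MixedGraph.IsCG.arrow_irrefl (hG : G.IsCG) (a : V) : ¬ G.arrow a a := hG.1.1.2.2.1 a

lemma MixedGraph.IsCG.noarc (hG : G.IsCG) : ∀ a b, ¬ G.arc a b := hG.2

lemma MixedGraph.IsCG.nosd (hG : G.IsCG) : G.NoArrowSemiDirectedCycle := hG.1.2

lemma MixedGraph.IsCG.line_nodes (hG : G.IsCG) {a b : V} (h : G.line a b) :
    a ∈ G.nodes ∧ b ∈ G.nodes := hG.1.1.2.2.2.2.2.1 a b h

lemma MixedGraph.IsCG.arrow_nodes (hG : G.IsCG) {a b : V} (h : G.arrow a b) :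
    a ∈ G.nodes ∧ b ∈ G.nodes := hG.1.1.2.2.2.2.2.2.1 a b h

/-- one-step closure of `S` under anteriority. -/
lemma sstep_mem_S {x y : V} (h : G.sdStep x y) (hy : y ∈ Sset G C) : x ∈ Sset G C := by
  by_cases hxC : x ∈ C
  · exact Or.inl hxC
  by_cases hxy : x = y
  · subst hxy; exact hy
  rcases hy with hyC | hyA
  · refine Or.inr ⟨Set.mem_biUnion hyC ⟨hxy, TransGen.single h⟩, hxC⟩
  · obtain ⟨hyU, -⟩ := hyA
    rw [Set.mem_iUnion₂] at hyU
    obtain ⟨c, hcC, hyc, htg⟩ := hyU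
    by_cases hxc : x = c
    · subst hxc; exact Or.inl hcC
    · exact Or.inr ⟨Set.mem_biUnion hcC ⟨hxc, TransGen.head h htg⟩, hxC⟩

lemma rtg_mem_S {x y : V} (h : Relation.ReflTransGen G.sdStep x y) (hy : y ∈ Sset G C) :
    x ∈ Sset G C := by
  induction h using Relation.ReflTransGen.head_induction_on with
  | refl => exact hy
  | head hstep _ ih => exact sstep_mem_S hstep ih

lemma line_mem_S_iff (hG : G.IsCG) {a b : V} (h : G.line a b) :
    a ∈ Sset G C ↔ b ∈ Sset G C :=
  ⟨fun ha => sstep_mem_S (Or.inl (hG.line_symm h)) ha,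
   fun hb => sstep_mem_S (Or.inl h) hb⟩

lemma arrow_mem_S (h : G.arrow a b) (hb : b ∈ Sset G C) : a ∈ Sset G C :=
  sstep_mem_S (Or.inr h) hb

lemma lst_mem_S_iff (hG : G.IsCG) {a b : V} (h : LSt G a b) :
    (a ∈ Sset G C ↔ b ∈ Sset G C) := by
  induction h with
  | refl => rfl
  | tail _ hl ih => exact ih.trans (line_mem_S_iff hG hl)

lemma lst_symm (hG : G.IsCG) {a b : V} (h : LSt G a b) : LSt G b a := by
  induction h with
  | refl => exact ReflTransGen.refl
  | tail _ hl ih => exact ReflTransGen.head (hG.line_symm hl) ih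

/-- new lines generated in step 3 of the conditioning algorithm. -/
def NL (G : MixedGraph V) (C : Set V) (x y : V) : Prop :=
  ∃ a b p, G.arrow x a ∧ G.lineSection p a b ∧ (∀ z ∈ p, z ∈ Sset G C) ∧
    G.arrow y b ∧ x ∉ p ∧ y ∉ p ∧ x ≠ y

lemma condStep2_line : (G.condStep2 (Sset G C)).line = G.line := rfl

lemma condStep2_arrow (hG : G.IsCG) {a b : V} :
    (G.condStep2 (Sset G C)).arrow a b ↔ G.arrow a b := by
  constructor
  · rintro (h | ⟨s, -, p, t, harc, -⟩)
    · exact h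
    · exact absurd harc (hG.noarc _ _)
  · exact Or.inl

lemma condStep2_noarc (hG : G.IsCG) (a b : V) : ¬ (G.condStep2 (Sset G C)).arc a b := by
  rintro (h | ⟨s, -, p, t, harc, -⟩ | ⟨s, -, p, t, harc, -⟩)
  · exact hG.noarc _ _ h
  · exact hG.noarc _ _ harc
  · exact hG.noarc _ _ harc

lemma condCl_bi (hG : G.IsCG) {x y : V}
    (h : CondCl (G.condStep2 (Sset G C)) (Sset G C) EKind.bi x y) : False := by
  generalize hk : EKind.bi = k at h
  induction h with
  | base_ln _ => exact EKind.noConfusion hk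
  | base_ar _ => exact EKind.noConfusion hk
  | base_bi hb => exact condStep2_noarc hG _ _ hb
  | symm_ln _ ih => exact ih hk
  | symm_bi _ ih => exact ih rfl
  | rLL _ _ _ _ _ _ _ ih1 ih2 => exact EKind.noConfusion hk
  | rBL _ _ _ _ _ hbi _ ih1 ih2 => exact ih1 rfl
  | rBB _ _ _ _ _ hbi _ ih1 ih2 => exact ih1 rfl

lemma condCl_ar (hG : G.IsCG) {x y : V} :
    CondCl (G.condStep2 (Sset G C)) (Sset G C) EKind.ar x y ↔ G.arrow x y := by
  constructor
  · intro h
    generalize hk : EKind.ar = k at h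
    induction h with
    | base_ln _ => exact EKind.noConfusion hk
    | base_ar ha => exact (condStep2_arrow hG).1 ha
    | base_bi _ => exact EKind.noConfusion hk
    | symm_ln _ ih => exact EKind.noConfusion hk
    | symm_bi _ ih => exact EKind.noConfusion hk
    | rLL _ _ _ _ _ _ _ ih1 ih2 => exact EKind.noConfusion hk
    | rBL _ _ _ _ _ hbi _ _ _ => exact absurd (condCl_bi hG hbi) id
    | rBB _ _ _ _ _ hbi _ _ _ => exact EKind.noConfusion hk
  · intro h
    exact CondCl.base_ar ((condStep2_arrow hG).2 h)

lemma condCl_ln (hG : G.IsCG) {x y : V} :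
    CondCl (G.condStep2 (Sset G C)) (Sset G C) EKind.ln x y ↔
      G.line x y ∨ NL G C x y ∨ NL G C y x := by
  constructor
  · intro h
    generalize hk : EKind.ln = k at h
    induction h with
    | base_ln hl => exact Or.inl hl
    | base_ar _ => exact EKind.noConfusion hk
    | base_bi _ => exact EKind.noConfusion hk
    | @symm_ln a b _ ih =>
      rcases ih rfl with h | h | h
      · exact Or.inl (hG.line_symm h)
      · exact Or.inr (Or.inr h)
      · exact Or.inr (Or.inl h)
    | symm_bi _ ih => exact EKind.noConfusion hk
    | @rLL a b aa bb p hls hS hne hna hnb h1 h2 ih1 ih2 =>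
      exact Or.inr (Or.inl ⟨aa, bb, p, (condCl_ar hG).1 h1, hls, hS,
        (condCl_ar hG).1 h2, hna, hnb, hne⟩)
    | rBL _ _ _ _ _ hbi _ _ _ => exact EKind.noConfusion hk
    | rBB _ _ _ _ _ hbi _ _ _ => exact EKind.noConfusion hk
  · rintro (h | ⟨a, b, p, h1, hls, hS, h2, hna, hnb, hne⟩ |
      ⟨a, b, p, h1, hls, hS, h2, hna, hnb, hne⟩)
    · exact CondCl.base_ln h
    · exact CondCl.rLL hls hS hne hna hnb (CondCl.base_ar ((condStep2_arrow hG).2 h1))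
        (CondCl.base_ar ((condStep2_arrow hG).2 h2))
    · exact CondCl.symm_ln (CondCl.rLL hls hS hne hna hnb
        (CondCl.base_ar ((condStep2_arrow hG).2 h1))
        (CondCl.base_ar ((condStep2_arrow hG).2 h2)))

lemma alphaCond_arc (hG : G.IsCG) (a b : V) : ¬ (G.alphaCond C).arc a b := by
  rintro ⟨⟨hbi, -, -⟩, -, -⟩
  exact condCl_bi hG hbi

lemma alphaCond_arrow (hG : G.IsCG) {a b : V} :
    (G.alphaCond C).arrow a b ↔ (G.arrow a b ∧ b ∉ Sset G C) ∧ a ∉ C ∧ b ∉ C := by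
  constructor
  · rintro ⟨h, haC, hbC⟩
    rcases h with ⟨har, hbS⟩ | ⟨hbi, -, -⟩
    · exact ⟨⟨(condCl_ar hG).1 har, hbS⟩, haC, hbC⟩
    · exact absurd (condCl_bi hG hbi) id
  · rintro ⟨⟨har, hbS⟩, haC, hbC⟩
    exact ⟨Or.inl ⟨(condCl_ar hG).2 har, hbS⟩, haC, hbC⟩

lemma alphaCond_line (hG : G.IsCG) {a b : V} :
    (G.alphaCond C).line a b ↔
      ((G.line a b ∨ NL G C a b ∨ NL G C b a) ∨ (G.arrow a b ∧ b ∈ Sset G C) ∨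
        (G.arrow b a ∧ a ∈ Sset G C)) ∧ a ∉ C ∧ b ∉ C := by
  constructor
  · rintro ⟨h, haC, hbC⟩
    rcases h with hln | ⟨har, hbS⟩ | ⟨har, haS⟩ | ⟨hbi, -⟩
    · exact ⟨Or.inl ((condCl_ln hG).1 hln), haC, hbC⟩
    · exact ⟨Or.inr (Or.inl ⟨(condCl_ar hG).1 har, hbS⟩), haC, hbC⟩
    · exact ⟨Or.inr (Or.inr ⟨(condCl_ar hG).1 har, haS⟩), haC, hbC⟩
    · exact absurd (condCl_bi hG hbi) id
  · rintro ⟨h, haC, hbC⟩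
    rcases h with hln | ⟨har, hbS⟩ | ⟨har, haS⟩
    · exact ⟨Or.inl ((condCl_ln hG).2 hln), haC, hbC⟩
    · exact ⟨Or.inr (Or.inl ⟨(condCl_ar hG).2 har, hbS⟩), haC, hbC⟩
    · exact ⟨Or.inr (Or.inr (Or.inl ⟨(condCl_ar hG).2 har, haS⟩)), haC, hbC⟩

lemma NL.memS (hG : G.IsCG) {x y : V} (h : NL G C x y) :
    x ∈ Sset G C ∧ y ∈ Sset G C := by
  obtain ⟨a, b, p, h1, hls, hS, h2, -, -, -⟩ := h
  obtain ⟨hpne, -, -, hh, hl⟩ := hls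
  exact ⟨arrow_mem_S h1 (hS a (List.mem_of_mem_head? hh)),
    arrow_mem_S h2 (hS b (List.mem_of_mem_getLast? hl))⟩

/-- a line of the conditioned graph starting outside `S` is an original line staying
outside `S`. -/
lemma alphaCond_line_outS (hG : G.IsCG) {a b : V} (haS : a ∉ Sset G C)
    (h : (G.alphaCond C).line a b) : G.line a b ∧ b ∉ Sset G C := by
  rw [alphaCond_line hG] at h
  obtain ⟨h, -, -⟩ := h
  rcases h with (hln | hnl | hnl) | ⟨har, hbS⟩ | ⟨har, haS'⟩
  · exact ⟨hln, fun hbS => haS ((line_mem_S_iff hG hln).2 hbS)⟩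
  · exact absurd (NL.memS hG hnl).1 haS
  · exact absurd (NL.memS hG hnl).2 haS
  · exact absurd (arrow_mem_S har hbS) haS
  · exact absurd haS' haS

lemma alphaCond_line_memS (hG : G.IsCG) {a b : V} (h : (G.alphaCond C).line a b) :
    (a ∈ Sset G C ↔ b ∈ Sset G C) := by
  constructor
  · intro haS
    by_contra hbS
    have := alphaCond_line_outS hG hbS ((by
      rw [alphaCond_line hG] at h ⊢
      obtain ⟨h1, h2, h3⟩ := h
      refine ⟨?_, h3, h2⟩
      rcases h1 with (hln | hnl | hnl) | hc | hc
      · exact Or.inl (Or.inl (hG.line_symm hln))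
      · exact Or.inl (Or.inr (Or.inr hnl))
      · exact Or.inl (Or.inr (Or.inl hnl))
      · exact Or.inr (Or.inr hc)
      · exact Or.inr (Or.inl hc)) : (G.alphaCond C).line b a)
    exact this.2 haS
  · intro hbS
    by_contra haS
    exact haS ((line_mem_S_iff hG (alphaCond_line_outS hG haS h).1).2 hbS)

lemma alphaCond_isCG (hG : G.IsCG) (C : Set V) : (G.alphaCond C).IsCG := by
  set G' := G.alphaCond C with hG'
  have hline : ∀ {a b : V}, G'.line a b → G'.line b a := by
    intro a b h
    rw [alphaCond_line hG] at h ⊢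
    obtain ⟨h1, h2, h3⟩ := h
    refine ⟨?_, h3, h2⟩
    rcases h1 with (hln | hnl | hnl) | hc | hc
    · exact Or.inl (Or.inl (hG.line_symm hln))
    · exact Or.inl (Or.inr (Or.inr hnl))
    · exact Or.inl (Or.inr (Or.inl hnl))
    · exact Or.inr (Or.inr hc)
    · exact Or.inr (Or.inl hc)
  refine ⟨⟨⟨fun a b h => hline h, ?_, ?_, ?_, ?_, ?_, ?_, ?_⟩, ?_⟩,
    fun a b => alphaCond_arc hG a b⟩
  · -- line irrefl
    intro a h
    rw [alphaCond_line hG] at h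
    rcases h.1 with (hln | hnl | hnl) | ⟨har, -⟩ | ⟨har, -⟩
    · exact hG.line_irrefl a hln
    · obtain ⟨_, _, _, _, _, _, _, _, _, hne⟩ := hnl
      exact hne rfl
    · obtain ⟨_, _, _, _, _, _, _, _, _, hne⟩ := hnl
      exact hne rfl
    · exact hG.arrow_irrefl a har
    · exact hG.arrow_irrefl a har
  · -- arrow irrefl
    intro a h
    rw [alphaCond_arrow hG] at h
    exact hG.arrow_irrefl a h.1.1
  · -- arc symm
    intro a b h
    exact absurd h (alphaCond_arc hG a b)
  · -- arc irrefl
    intro a h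
    exact alphaCond_arc hG a a h
  · -- line nodes
    intro a b h
    have h' := h
    rw [alphaCond_line hG] at h'
    obtain ⟨h1, h2, h3⟩ := h'
    have ha : a ∈ G.nodes ∧ b ∈ G.nodes := by
      rcases h1 with (hln | hnl | hnl) | ⟨har, -⟩ | ⟨har, -⟩
      · exact hG.line_nodes hln
      · obtain ⟨x, y, p, hx, -, -, hy, -⟩ := hnl
        exact ⟨(hG.arrow_nodes hx).1, (hG.arrow_nodes hy).1⟩
      · obtain ⟨x, y, p, hx, -, -, hy, -⟩ := hnl
        exact ⟨(hG.arrow_nodes hy).1, (hG.arrow_nodes hx).1⟩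
      · exact hG.arrow_nodes har
      · exact ⟨(hG.arrow_nodes har).2, (hG.arrow_nodes har).1⟩
    exact ⟨⟨ha.1, h2⟩, ha.2, h3⟩
  · -- arrow nodes
    intro a b h
    rw [alphaCond_arrow hG] at h
    exact ⟨⟨(hG.arrow_nodes h.1.1).1, h.2.1⟩, (hG.arrow_nodes h.1.1).2, h.2.2⟩
  · -- arc nodes
    intro a b h
    exact absurd h (alphaCond_arc hG a b)
  · -- no semi-directed cycle with an arrow
    intro a b harr hrtg
    rw [alphaCond_arrow hG] at harr
    obtain ⟨⟨harr, hbS⟩, -, -⟩ := harr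
    have key : ∀ {x y : V}, Relation.ReflTransGen G'.sdStep x y → x ∉ Sset G C →
        Relation.ReflTransGen G.sdStep x y ∧ y ∉ Sset G C := by
      intro x y h
      induction h using Relation.ReflTransGen.head_induction_on with
      | refl => exact fun hx => ⟨ReflTransGen.refl, hx⟩
      | @head x z hstep _ ih =>
        intro hx
        have hz : G.sdStep x z ∧ z ∉ Sset G C := by
          rcases hstep with hln | har'
          · have := alphaCond_line_outS hG hx hln
            exact ⟨Or.inl this.1, this.2⟩
          · rw [alphaCond_arrow hG] at har'
            exact ⟨Or.inr har'.1.1, har'.1.2⟩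
        obtain ⟨hrest, hyS⟩ := ih hz.2
        exact ⟨ReflTransGen.head hz.1 hrest, hyS⟩
    exact hG.nosd a b harr (key hrtg hbS).1

end Core

section Detour

open MixedGraph Relation

variable {G : MixedGraph V} {C C₁ : Set V}

lemma connE_true {H : MixedGraph V} {a v : V} : connE H true a v ↔ H.arrow a v := by
  simp [connE]

lemma connE_false {H : MixedGraph V} {a v : V} : connE H false a v ↔ H.arrow v a := by
  simp [connE]

lemma lst_la {H : MixedGraph V} {D : Set V} {a b : V} (h : LSt H a b)
    (hn : ∀ z, LSt H a z → z ∉ D) : LA H D a b := by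
  refine ⟨hn a ReflTransGen.refl, ?_⟩
  induction h with
  | refl => exact ReflTransGen.refl
  | @tail b' b hab hline ih => exact ih.tail ⟨hline, hn b (hab.tail hline)⟩

/-- core induction for the detour lemma. -/
lemma detour_aux (hG : G.IsCG) {D : Set V} {i m c : V}
    (hwalk : Relation.ReflTransGen G.sdStep m c) (hcD : c ∈ D) :
    ∀ {x w m₀ : V}, LSt G m x → G.arrow w x → Reach G D i m₀ true → LSt G m₀ m →
      Reach G D i w false := by
  induction hwalk using Relation.ReflTransGen.head_induction_on with
  | refl =>
    intro x w m₀ hmx harr hr hm₀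
    exact Reach.stepC hr ⟨c, hcD, hm₀, hmx⟩ harr
  | @head m n hstep hrest ih =>
    intro x w m₀ hmx harr hr hm₀
    rcases hstep with hline | harrmn
    · exact ih ((ReflTransGen.single (hG.line_symm hline)).trans hmx) harr hr
        (hm₀.tail hline)
    · by_cases hcase : ∃ c' ∈ D, LSt G m₀ c'
      · obtain ⟨c', hc'D, h1⟩ := hcase
        exact Reach.stepC hr ⟨c', hc'D, h1, ((lst_symm hG h1).trans hm₀).trans hmx⟩ harr
      · have hn : ∀ z, LSt G m₀ z → z ∉ D := by
          intro z hz hzD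
          exact hcase ⟨z, hzD, hz⟩
        have hRn : Reach G D i n true :=
          Reach.stepN hr (by simp) (lst_la hm₀ hn) (connE_true.2 harrmn)
        have hRm : Reach G D i m false :=
          ih ReflTransGen.refl harrmn hRn ReflTransGen.refl
        refine Reach.stepN hRm (by simp) ?_ (connE_false.2 harr)
        exact lst_la hmx fun z hz => hn z (hm₀.trans hz)

/-- the detour lemma: a pending collider section inside `S` can always be closed. -/
lemma detour (hG : G.IsCG) {i m x w : V}
    (hmS : m ∈ Sset G C) (hr : Reach G (C ∪ C₁) i m true) (hmx : LSt G m x)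
    (harr : G.arrow w x) : Reach G (C ∪ C₁) i w false := by
  rcases hmS with hmC | hmA
  · exact detour_aux hG ReflTransGen.refl (Or.inl hmC) hmx harr hr ReflTransGen.refl
  · obtain ⟨hU, -⟩ := hmA
    rw [Set.mem_iUnion₂] at hU
    obtain ⟨c, hcC, -, htg⟩ := hU
    exact detour_aux hG htg.to_reflTransGen (Or.inl hcC) hmx harr hr ReflTransGen.refl

/-- extraction of a nonrepeating path from line-connectivity. -/
lemma lst_nodup_path (hG : G.IsCG) {a b : V} (h : LSt G a b) :
    ∃ p, G.lineSection p a b ∧ ∀ x ∈ p, LSt G a x := by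
  induction h using Relation.ReflTransGen.head_induction_on with
  | refl =>
    refine ⟨[b], ⟨by simp, List.isChain_singleton _, List.nodup_singleton _, rfl, rfl⟩, ?_⟩
    intro x hx
    simp only [List.mem_singleton] at hx
    subst hx
    exact ReflTransGen.refl
  | @head a c hline hrest ih =>
    obtain ⟨p, ⟨hpne, hpch, hpnd, hph, hpl⟩, hmem⟩ := ih
    by_cases hap : a ∈ p
    · obtain ⟨s, t, rfl⟩ := List.append_of_mem hap
      refine ⟨a :: t, ⟨by simp, ((List.isChain_append).1 hpch).2.1, ?_, rfl, ?_⟩, ?_⟩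
      · exact hpnd.sublist (List.sublist_append_right s (a :: t))
      · rwa [List.getLast?_append_of_ne_nil s (by simp)] at hpl
      · intro x hx
        exact (ReflTransGen.single hline).trans (hmem x (by simp [hx]))
    · refine ⟨a :: p, ⟨by simp, List.isChain_cons.2 ⟨?_, hpch⟩, List.nodup_cons.2 ⟨hap, hpnd⟩,
        rfl, ?_⟩, ?_⟩
      · intro y hy
        rw [hph] at hy
        simp only [Option.mem_def, Option.some.injEq] at hy
        subst hy
        exact hline
      · rw [show a :: p = [a] ++ p by simp, List.getLast?_append_of_ne_nil [a] hpne]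
        exact hpl
      · intro x hx
        rcases List.mem_cons.1 hx with rfl | hx
        · exact ReflTransGen.refl
        · exact (ReflTransGen.single hline).trans (hmem x hx)

end Detour

section Forward

open MixedGraph Relation

variable {G : MixedGraph V} {C C₁ : Set V} {i : V}

/-- state: inside an open section of the simulated walk, entered backwards (or at the
start). -/
def Qb (G : MixedGraph V) (C C₁ : Set V) (i x : V) : Prop :=
  LA G (C ∪ C₁) i x ∨ ∃ m, Reach G (C ∪ C₁) i m false ∧ LA G (C ∪ C₁) m x

/-- state: inside an open section of the simulated walk, entered forwards from a node
of `S`. -/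
@[reducible] def Qf (G : MixedGraph V) (C C₁ : Set V) (i x : V) : Prop :=
  ∃ m, m ∈ Sset G C ∧ Reach G (C ∪ C₁) i m true ∧ LA G (C ∪ C₁) m x

lemma Qb.closeFwd {x v : V} (h : Qb G C C₁ i x) (harr : G.arrow x v) :
    Reach G (C ∪ C₁) i v true := by
  rcases h with h | ⟨m, hr, hla⟩
  · exact Reach.start h (connE_true.2 harr)
  · exact Reach.stepN hr (by simp) hla (connE_true.2 harr)

lemma Qf.closeFwd {x v : V} (h : Qf G C C₁ i x) (harr : G.arrow x v) :
    Reach G (C ∪ C₁) i v true := by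
  obtain ⟨m, -, hr, hla⟩ := h
  exact Reach.stepN hr (by simp) hla (connE_true.2 harr)

lemma Qb.closeBwd {x v : V} (h : Qb G C C₁ i x) (harr : G.arrow v x) :
    Reach G (C ∪ C₁) i v false := by
  rcases h with h | ⟨m, hr, hla⟩
  · exact Reach.start h (connE_false.2 harr)
  · exact Reach.stepN hr (by simp) hla (connE_false.2 harr)

lemma Qf.closeBwd (hG : G.IsCG) {x v : V} (h : Qf G C C₁ i x) (harr : G.arrow v x) :
    Reach G (C ∪ C₁) i v false := by
  obtain ⟨m, hmS, hr, hla⟩ := h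
  exact detour hG hmS hr hla.lst harr

lemma lineSection_lst {H : MixedGraph V} {p : List V} {a b : V}
    (h : H.lineSection p a b) : LSt H a b := by
  obtain ⟨-, hch, -, hh, hl⟩ := h
  exact (chain'_lst_mem hch hh hl b (List.mem_of_mem_getLast? hl)).1

/-- simulation of a section of the conditioned graph lying inside `S`. -/
lemma secsim (hG : G.IsCG) {a b : V} (haS : a ∈ Sset G C)
    (h : Relation.ReflTransGen (fun x y => (G.alphaCond C).line x y ∧ y ∉ C₁) a b)
    (hq : Qb G C C₁ i a ∨ Qf G C C₁ i a) :
    (Qb G C C₁ i b ∨ Qf G C C₁ i b) ∧ b ∈ Sset G C := by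
  induction h with
  | refl => exact ⟨hq, haS⟩
  | @tail x y hax hxy ih =>
    obtain ⟨hqx, hxS⟩ := ih
    obtain ⟨hline', hyC₁⟩ := hxy
    rw [alphaCond_line hG] at hline'
    obtain ⟨hedge, hxC, hyC⟩ := hline'
    have hyD : ∀ (hyS : y ∈ Sset G C), y ∉ C ∪ C₁ := fun _ h =>
      h.elim (fun h => hyC h) (fun h => hyC₁ h)
    rcases hedge with (hln | hnl | hnl) | ⟨har, hyS⟩ | ⟨har, hxS'⟩
    · -- original line
      have hyS : y ∈ Sset G C := (line_mem_S_iff hG hln).1 hxS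
      refine ⟨?_, hyS⟩
      rcases hqx with h | ⟨m, hmS, hr, hla⟩
      · exact Or.inl (h.imp (fun h => h.tail hln (hyD hyS))
          (fun ⟨m, hr, hla⟩ => ⟨m, hr, hla.tail hln (hyD hyS)⟩))
      · exact Or.inr ⟨m, hmS, hr, hla.tail hln (hyD hyS)⟩
    · -- new line x—y, traversed from the `arrow x a'` side
      obtain ⟨a', b', p, harx, hls, hpS, hary, -, -, -⟩ := hnl
      have ha'S : a' ∈ Sset G C := hpS a' (List.mem_of_mem_head? hls.2.2.2.1)
      have hRa' : Reach G (C ∪ C₁) i a' true := by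
        rcases hqx with h | h
        · exact h.closeFwd harx
        · exact h.closeFwd harx
      have hyS : y ∈ Sset G C := arrow_mem_S hary (hpS b'
        (List.mem_of_mem_getLast? hls.2.2.2.2))
      have hRy : Reach G (C ∪ C₁) i y false :=
        detour hG ha'S hRa' (lineSection_lst hls) hary
      exact ⟨Or.inl (Or.inr ⟨y, hRy, LA.refl (hyD hyS)⟩), hyS⟩
    · -- new line y—x, traversed from the `arrow x b'` side
      obtain ⟨a', b', p, hary, hls, hpS, harx, -, -, -⟩ := hnl
      have hb'S : b' ∈ Sset G C := hpS b' (List.mem_of_mem_getLast? hls.2.2.2.2)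
      have hRb' : Reach G (C ∪ C₁) i b' true := by
        rcases hqx with h | h
        · exact h.closeFwd harx
        · exact h.closeFwd harx
      have hyS : y ∈ Sset G C := arrow_mem_S hary (hpS a'
        (List.mem_of_mem_head? hls.2.2.2.1))
      have hRy : Reach G (C ∪ C₁) i y false :=
        detour hG hb'S hRb' (lst_symm hG (lineSection_lst hls)) hary
      exact ⟨Or.inl (Or.inr ⟨y, hRy, LA.refl (hyD hyS)⟩), hyS⟩
    · -- converted arrow x → y
      have hRy : Reach G (C ∪ C₁) i y true := by
        rcases hqx with h | h
        · exact h.closeFwd har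
        · exact h.closeFwd har
      exact ⟨Or.inr ⟨y, hyS, hRy, LA.refl (hyD hyS)⟩, hyS⟩
    · -- converted arrow y → x
      have hyS : y ∈ Sset G C := arrow_mem_S har hxS'
      have hRy : Reach G (C ∪ C₁) i y false := by
        rcases hqx with h | h
        · exact h.closeBwd har
        · exact h.closeBwd hG har
      exact ⟨Or.inl (Or.inr ⟨y, hRy, LA.refl (hyD hyS)⟩), hyS⟩

lemma la'_outS (hG : G.IsCG) {a b : V} (haS : a ∉ Sset G C)
    (h : LA (G.alphaCond C) C₁ a b) : LA G (C ∪ C₁) a b ∧ b ∉ Sset G C := by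
  obtain ⟨haC₁, h⟩ := h
  have haD : a ∉ C ∪ C₁ := by
    rintro (hc | hc)
    · exact haS (Or.inl hc)
    · exact haC₁ hc
  refine ?_
  induction h with
  | refl => exact ⟨LA.refl haD, haS⟩
  | @tail x y hax hxy ih =>
    obtain ⟨hla, hxS⟩ := ih
    obtain ⟨hline, hyC₁⟩ := hxy
    obtain ⟨hln, hyS⟩ := alphaCond_line_outS hG hxS hline
    exact ⟨hla.tail hln (by rintro (hc | hc); exacts [hyS (Or.inl hc), hyC₁ hc]), hyS⟩

lemma lst'_outS (hG : G.IsCG) {a b : V} (haS : a ∉ Sset G C)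
    (h : LSt (G.alphaCond C) a b) : LSt G a b ∧ b ∉ Sset G C := by
  induction h with
  | refl => exact ⟨ReflTransGen.refl, haS⟩
  | @tail x y hax hxy ih =>
    obtain ⟨hlst, hxS⟩ := ih
    obtain ⟨hln, hyS⟩ := alphaCond_line_outS hG hxS hxy
    exact ⟨hlst.tail hln, hyS⟩

lemma reach'_true_outS (hG : G.IsCG) {v : V}
    (h : Reach (G.alphaCond C) C₁ i v true) : v ∉ Sset G C := by
  cases h with
  | start hla hc =>
    rw [connE_true] at hc
    exact ((alphaCond_arrow hG).1 hc).1.2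
  | stepN _ _ _ hc =>
    rw [connE_true] at hc
    exact ((alphaCond_arrow hG).1 hc).1.2

lemma reach'_sim (hG : G.IsCG) (hiD : i ∉ C ∪ C₁) {v : V} {d : Bool}
    (h : Reach (G.alphaCond C) C₁ i v d) : Reach G (C ∪ C₁) i v d := by
  induction h with
  | @start a v d hla hc =>
    by_cases hiS : i ∈ Sset G C
    · have hsec := secsim hG hiS hla.2 (Or.inl (Or.inl (LA.refl hiD)))
      cases d with
      | true =>
        rw [connE_true] at hc
        obtain ⟨⟨har, hvS⟩, -, -⟩ := (alphaCond_arrow hG).1 hc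
        rcases hsec.1 with h | h
        · exact h.closeFwd har
        · exact h.closeFwd har
      | false =>
        rw [connE_false] at hc
        exact absurd hsec.2 ((alphaCond_arrow hG).1 hc).1.2
    · have hla' := la'_outS hG hiS hla
      cases d with
      | true =>
        rw [connE_true] at hc
        exact Reach.start hla'.1 (connE_true.2 ((alphaCond_arrow hG).1 hc).1.1)
      | false =>
        rw [connE_false] at hc
        exact Reach.start hla'.1 (connE_false.2 ((alphaCond_arrow hG).1 hc).1.1)
  | @stepN a b v d d' hr hn hla hc ih =>
    by_cases haS : a ∈ Sset G C
    · have hd : d = false := by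
        cases d
        · rfl
        · exact absurd haS (reach'_true_outS hG hr)
      subst hd
      have haD : a ∉ C ∪ C₁ := by
        rintro (hcc | hcc)
        · cases hr with
          | start _ hc' => exact ((alphaCond_arrow hG).1 (connE_false.1 hc')).2.1 hcc
          | stepN _ _ _ hc' => exact ((alphaCond_arrow hG).1 (connE_false.1 hc')).2.1 hcc
          | stepC _ _ hc' => exact ((alphaCond_arrow hG).1 hc').2.1 hcc
        · exact hla.1 hcc
      have hsec := secsim hG haS hla.2 (Or.inl (Or.inr ⟨a, ih, LA.refl haD⟩))
      cases d' with
      | true =>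
        rw [connE_true] at hc
        obtain ⟨⟨har, -⟩, -, -⟩ := (alphaCond_arrow hG).1 hc
        rcases hsec.1 with h | h
        · exact h.closeFwd har
        · exact h.closeFwd har
      | false =>
        rw [connE_false] at hc
        exact absurd hsec.2 ((alphaCond_arrow hG).1 hc).1.2
    · have hla' := la'_outS hG haS hla
      cases d' with
      | true =>
        rw [connE_true] at hc
        exact Reach.stepN ih hn hla'.1 (connE_true.2 ((alphaCond_arrow hG).1 hc).1.1)
      | false =>
        rw [connE_false] at hc
        exact Reach.stepN ih hn hla'.1 (connE_false.2 ((alphaCond_arrow hG).1 hc).1.1)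
  | @stepC a b v hr hlc har ih =>
    have haS := reach'_true_outS hG hr
    obtain ⟨c, hcC₁, h1, h2⟩ := hlc
    obtain ⟨h1', hcS⟩ := lst'_outS hG haS h1
    obtain ⟨h2', -⟩ := lst'_outS hG hcS h2
    exact Reach.stepC ih ⟨c, Or.inr hcC₁, h1', h2'⟩
      ((alphaCond_arrow hG).1 har).1.1

lemma la'_notC (hG : G.IsCG) {a b : V} (h : LA (G.alphaCond C) C₁ a b) (haC : a ∉ C) :
    b ∉ C := by
  obtain ⟨-, h⟩ := h
  induction h with
  | refl => exact haC
  | tail _ hxy ih => exact ((alphaCond_line hG).1 hxy.1).2.2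

lemma main_fwd (hG : G.IsCG) {j : V} (hiD : i ∉ C ∪ C₁)
    (h : AltCon (G.alphaCond C) C₁ i j) : AltCon G (C ∪ C₁) i j := by
  have qb_conc : ∀ x, Qb G C C₁ i x ∨ Qf G C C₁ i x → LA G (C ∪ C₁) x j →
      AltCon G (C ∪ C₁) i j := by
    rintro x ((h | ⟨m, hr, hla⟩) | ⟨m, -, hr, hla⟩) hxj
    · exact Or.inl (h.trans hxj)
    · exact Or.inr ⟨m, false, hr, hla.trans hxj⟩
    · exact Or.inr ⟨m, true, hr, hla.trans hxj⟩
  rcases h with hla | ⟨v, d, hr, hla⟩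
  · by_cases hiS : i ∈ Sset G C
    · have hsec := secsim hG hiS hla.2 (Or.inl (Or.inl (LA.refl hiD)))
      refine qb_conc j hsec.1 (LA.refl ?_)
      rintro (hc | hc)
      · exact la'_notC hG hla (fun hc' => hiD (Or.inl hc')) hc
      · exact hla.notinD hc
    · exact Or.inl (la'_outS hG hiS hla).1
  · have hrG := reach'_sim hG hiD hr
    by_cases hvS : v ∈ Sset G C
    · have hd : d = false := by
        cases d
        · rfl
        · exact absurd hvS (reach'_true_outS hG hr)
      subst hd
      have hvD : v ∉ C ∪ C₁ := by
        rintro (hcc | hcc)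
        · cases hr with
          | start _ hc' => exact ((alphaCond_arrow hG).1 (connE_false.1 hc')).2.1 hcc
          | stepN _ _ _ hc' => exact ((alphaCond_arrow hG).1 (connE_false.1 hc')).2.1 hcc
          | stepC _ _ hc' => exact ((alphaCond_arrow hG).1 hc').2.1 hcc
        · exact hla.1 hcc
      have hsec := secsim hG hvS hla.2 (Or.inl (Or.inr ⟨v, hrG, LA.refl hvD⟩))
      refine qb_conc j hsec.1 (LA.refl ?_)
      rintro (hc | hc)
      · exact la'_notC hG hla (fun hc' => hvD (Or.inl hc')) hc
      · exact hla.notinD hc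
    · obtain ⟨hlaG, -⟩ := la'_outS hG hvS hla
      exact Or.inr ⟨v, d, hrG, hlaG⟩

end Forward

section Backward

open MixedGraph Relation

variable {G : MixedGraph V} {C C₁ : Set V} {i : V}

/-- state in the conditioned graph: inside an open section at `x`. -/
@[reducible] def Qb' (G : MixedGraph V) (C C₁ : Set V) (i x : V) : Prop :=
  LA (G.alphaCond C) C₁ i x ∨
    ∃ m, Reach (G.alphaCond C) C₁ i m false ∧ LA (G.alphaCond C) C₁ m x

lemma Qb'.extend {x y : V} (h : Qb' G C C₁ i x) (hxy : LA (G.alphaCond C) C₁ x y) :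
    Qb' G C C₁ i y := by
  rcases h with h | ⟨m, hr, hla⟩
  · exact Or.inl (h.trans hxy)
  · exact Or.inr ⟨m, hr, hla.trans hxy⟩

lemma Qb'.closeFwd {b v : V} (h : Qb' G C C₁ i b) (har : (G.alphaCond C).arrow b v) :
    Reach (G.alphaCond C) C₁ i v true := by
  rcases h with h | ⟨m, hr, hla⟩
  · exact Reach.start h (connE_true.2 har)
  · exact Reach.stepN hr (by simp) hla (connE_true.2 har)

lemma la_to_la' (hG : G.IsCG) {a b : V} (h : LA G (C ∪ C₁) a b) :
    LA (G.alphaCond C) C₁ a b := by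
  obtain ⟨haD, h2⟩ := h
  refine ⟨fun hc => haD (Or.inr hc), ?_⟩
  have key : ∀ {x : V}, Relation.ReflTransGen (fun x y => G.line x y ∧ y ∉ C ∪ C₁) x b →
      x ∉ C ∪ C₁ → Relation.ReflTransGen
        (fun x y => (G.alphaCond C).line x y ∧ y ∉ C₁) x b := by
    intro x hx
    induction hx using Relation.ReflTransGen.head_induction_on with
    | refl => exact fun _ => ReflTransGen.refl
    | @head x y hstep hrest ih =>
      intro hxD
      refine ReflTransGen.head ⟨(alphaCond_line hG).2 ⟨Or.inl (Or.inl hstep.1),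
        fun hc => hxD (Or.inl hc), fun hc => hstep.2 (Or.inl hc)⟩,
        fun hc => hstep.2 (Or.inr hc)⟩ (ih hstep.2)
  exact key h2 haD

lemma lst_to_lst'_outS (hG : G.IsCG) {a b : V} (haS : a ∉ Sset G C)
    (h : LSt G a b) : LSt (G.alphaCond C) a b ∧ b ∉ Sset G C := by
  induction h with
  | refl => exact ⟨ReflTransGen.refl, haS⟩
  | @tail x y hax hxy ih =>
    obtain ⟨hlst, hxS⟩ := ih
    have hyS : y ∉ Sset G C := fun hy => hxS ((line_mem_S_iff hG hxy).2 hy)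
    refine ⟨hlst.tail ?_, hyS⟩
    exact (alphaCond_line hG).2 ⟨Or.inl (Or.inl hxy),
      fun hc => hxS (Or.inl hc), fun hc => hyS (Or.inl hc)⟩

/-- construction of a new line of the conditioned graph from an in-`S` collider. -/
lemma mk_line' (hG : G.IsCG) {u v a b : V} (hua : G.arrow u a) (haS : a ∈ Sset G C)
    (hab : LSt G a b) (hvb : G.arrow v b) (huv : u ≠ v) (huC : u ∉ C) (hvC : v ∉ C) :
    (G.alphaCond C).line u v := by
  obtain ⟨p, hp, hmem⟩ := lst_nodup_path hG hab
  have hup : u ∉ p := by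
    intro hu
    exact hG.nosd u a hua (ReflTransGen.mono (fun x y h => Or.inl h) _ _ (hmem u hu))
  have hvp : v ∉ p := by
    intro hv
    have h1 : LSt G b v := lst_symm hG ((lst_symm hG (hmem v hv)).trans hab)
    exact hG.nosd v b hvb (ReflTransGen.mono (fun x y h => Or.inl h) _ _ h1)
  refine (alphaCond_line hG).2 ⟨Or.inl (Or.inr (Or.inl ?_)), huC, hvC⟩
  exact ⟨a, b, p, hua, hp, fun z hz => (lst_mem_S_iff hG (hmem z hz)).1 haS,
    hvb, hup, hvp, huv⟩

lemma phi (hG : G.IsCG) (hiD : i ∉ C ∪ C₁) {v : V} {d : Bool}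
    (h : Reach G (C ∪ C₁) i v d) :
    (v ∉ Sset G C → Reach (G.alphaCond C) C₁ i v d) ∧
    (v ∈ Sset G C → d = true →
      ∃ u, u ∈ Sset G C ∧ u ∉ C ∪ C₁ ∧ Qb' G C C₁ i u ∧ G.arrow u v) ∧
    (v ∈ Sset G C → d = false → v ∉ C ∪ C₁ → Qb' G C C₁ i v) := by
  have hCS : ∀ {z : V}, z ∉ Sset G C → z ∉ C := fun hz hc => hz (Or.inl hc)
  induction h with
  | @start a v d hla hc =>
    have haD : a ∉ C ∪ C₁ := hla.notinD
    have haC : a ∉ C := fun hc => haD (Or.inl hc)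
    by_cases hiS : i ∈ Sset G C
    · have haS : a ∈ Sset G C := (lst_mem_S_iff hG hla.lst).1 hiS
      have hQa : Qb' G C C₁ i a := Or.inl (la_to_la' hG hla)
      cases d with
      | true =>
        rw [connE_true] at hc
        by_cases hvS : v ∈ Sset G C
        · exact ⟨fun hv => absurd hvS hv,
            fun _ _ => ⟨a, haS, haD, hQa, hc⟩, fun _ h => by simp at h⟩
        · refine ⟨fun _ => hQa.closeFwd ((alphaCond_arrow hG).2
            ⟨⟨hc, hvS⟩, haC, hCS hvS⟩), fun hv => absurd hv hvS, fun _ h => by simp at h⟩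
      | false =>
        rw [connE_false] at hc
        have hvS : v ∈ Sset G C := arrow_mem_S hc haS
        refine ⟨fun hv => absurd hvS hv, fun _ h => by simp at h, fun _ _ hvD => ?_⟩
        have hline : (G.alphaCond C).line a v := (alphaCond_line hG).2
          ⟨Or.inr (Or.inr ⟨hc, haS⟩), haC, fun hcc => hvD (Or.inl hcc)⟩
        exact Or.inl ((la_to_la' hG hla).tail hline (fun hcc => hvD (Or.inr hcc)))
    · have haS : a ∉ Sset G C := fun ha => hiS ((lst_mem_S_iff hG hla.lst).2 ha)
      have hla' := la_to_la' hG hla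
      cases d with
      | true =>
        rw [connE_true] at hc
        have hvS : v ∉ Sset G C := fun hv => haS (arrow_mem_S hc hv)
        exact ⟨fun _ => Reach.start hla' (connE_true.2 ((alphaCond_arrow hG).2
          ⟨⟨hc, hvS⟩, hCS haS, hCS hvS⟩)), fun hv => absurd hv hvS, fun _ h => by simp at h⟩
      | false =>
        rw [connE_false] at hc
        by_cases hvS : v ∈ Sset G C
        · refine ⟨fun hv => absurd hvS hv, fun _ h => by simp at h, fun _ _ hvD => ?_⟩
          exact Or.inr ⟨v, Reach.start hla' (connE_false.2 ((alphaCond_arrow hG).2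
            ⟨⟨hc, haS⟩, fun hcc => hvD (Or.inl hcc), hCS haS⟩)),
            LA.refl (fun hcc => hvD (Or.inr hcc))⟩
        · exact ⟨fun _ => Reach.start hla' (connE_false.2 ((alphaCond_arrow hG).2
            ⟨⟨hc, haS⟩, hCS hvS, hCS haS⟩)), fun hv => absurd hv hvS,
            fun hv => absurd hv hvS⟩
  | @stepN a b v d d' hr hn hla hc ih =>
    have haD : a ∉ C ∪ C₁ := hla.1
    have hbD : b ∉ C ∪ C₁ := hla.notinD
    have hbC : b ∉ C := fun hcc => hbD (Or.inl hcc)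
    by_cases haS : a ∈ Sset G C
    · have hbS : b ∈ Sset G C := (lst_mem_S_iff hG hla.lst).1 haS
      have hQb : Qb' G C C₁ i b := by
        cases d with
        | true =>
          obtain ⟨u, huS, huD, hQu, har⟩ := ih.2.1 haS rfl
          have hline : (G.alphaCond C).line u a := (alphaCond_line hG).2
            ⟨Or.inr (Or.inl ⟨har, haS⟩), fun hcc => huD (Or.inl hcc),
              fun hcc => haD (Or.inl hcc)⟩
          exact (hQu.extend ⟨fun hcc => huD (Or.inr hcc),
            ReflTransGen.single ⟨hline, fun hcc => haD (Or.inr hcc)⟩⟩).extend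
            (la_to_la' hG hla)
        | false =>
          exact (ih.2.2 haS rfl haD).extend (la_to_la' hG hla)
      cases d' with
      | true =>
        rw [connE_true] at hc
        by_cases hvS : v ∈ Sset G C
        · exact ⟨fun hv => absurd hvS hv, fun _ _ => ⟨b, hbS, hbD, hQb, hc⟩,
            fun _ h => by simp at h⟩
        · exact ⟨fun _ => hQb.closeFwd ((alphaCond_arrow hG).2
            ⟨⟨hc, hvS⟩, hbC, hCS hvS⟩), fun hv => absurd hv hvS, fun _ h => by simp at h⟩
      | false =>
        rw [connE_false] at hc
        have hvS : v ∈ Sset G C := arrow_mem_S hc hbS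
        refine ⟨fun hv => absurd hvS hv, fun _ h => by simp at h, fun _ _ hvD => ?_⟩
        have hline : (G.alphaCond C).line b v := (alphaCond_line hG).2
          ⟨Or.inr (Or.inr ⟨hc, hbS⟩), hbC, fun hcc => hvD (Or.inl hcc)⟩
        exact hQb.extend ⟨fun hcc => hbD (Or.inr hcc),
          ReflTransGen.single ⟨hline, fun hcc => hvD (Or.inr hcc)⟩⟩
    · have hbS : b ∉ Sset G C := fun hb => haS ((lst_mem_S_iff hG hla.lst).2 hb)
      have hR'a := ih.1 haS
      have hla' := la_to_la' hG hla
      cases d' with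
      | true =>
        rw [connE_true] at hc
        have hvS : v ∉ Sset G C := fun hv => hbS (arrow_mem_S hc hv)
        exact ⟨fun _ => Reach.stepN hR'a hn hla' (connE_true.2 ((alphaCond_arrow hG).2
          ⟨⟨hc, hvS⟩, hbC, hCS hvS⟩)), fun hv => absurd hv hvS, fun _ h => by simp at h⟩
      | false =>
        rw [connE_false] at hc
        by_cases hvS : v ∈ Sset G C
        · refine ⟨fun hv => absurd hvS hv, fun _ h => by simp at h, fun _ _ hvD => ?_⟩
          exact Or.inr ⟨v, Reach.stepN hR'a hn hla' (connE_false.2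
            ((alphaCond_arrow hG).2 ⟨⟨hc, hbS⟩, fun hcc => hvD (Or.inl hcc), hbC⟩)),
            LA.refl (fun hcc => hvD (Or.inr hcc))⟩
        · exact ⟨fun _ => Reach.stepN hR'a hn hla' (connE_false.2
            ((alphaCond_arrow hG).2 ⟨⟨hc, hbS⟩, hCS hvS, hbC⟩)),
            fun hv => absurd hv hvS, fun hv => absurd hv hvS⟩
  | @stepC a b v hr hlc har ih =>
    obtain ⟨c, hcD, h1, h2⟩ := hlc
    have hab : LSt G a b := h1.trans h2
    by_cases haS : a ∈ Sset G C
    · obtain ⟨u, huS, huD, hQu, hua⟩ := ih.2.1 haS rfl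
      have hbS : b ∈ Sset G C := (lst_mem_S_iff hG hab).1 haS
      have hvS : v ∈ Sset G C := arrow_mem_S har hbS
      refine ⟨fun hv => absurd hvS hv, fun _ h => by simp at h, fun _ _ hvD => ?_⟩
      by_cases huv : u = v
      · subst huv; exact hQu
      · have hline := mk_line' hG hua haS hab har huv
          (fun hcc => huD (Or.inl hcc)) (fun hcc => hvD (Or.inl hcc))
        exact hQu.extend ⟨fun hcc => huD (Or.inr hcc),
          ReflTransGen.single ⟨hline, fun hcc => hvD (Or.inr hcc)⟩⟩
    · have hR'a := ih.1 haS
      obtain ⟨h1', hcS⟩ := lst_to_lst'_outS hG haS h1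
      obtain ⟨h2', hbS⟩ := lst_to_lst'_outS hG hcS h2
      have hcC₁ : c ∈ C₁ := by
        rcases hcD with hcc | hcc
        · exact absurd (Or.inl hcc : c ∈ Sset G C) hcS
        · exact hcc
      have hlc' : LC (G.alphaCond C) C₁ a b := ⟨c, hcC₁, h1', h2'⟩
      by_cases hvS : v ∈ Sset G C
      · refine ⟨fun hv => absurd hvS hv, fun _ h => by simp at h, fun _ _ hvD => ?_⟩
        exact Or.inr ⟨v, Reach.stepC hR'a hlc' ((alphaCond_arrow hG).2
          ⟨⟨har, hbS⟩, fun hcc => hvD (Or.inl hcc), hCS hbS⟩),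
          LA.refl (fun hcc => hvD (Or.inr hcc))⟩
      · exact ⟨fun _ => Reach.stepC hR'a hlc' ((alphaCond_arrow hG).2
          ⟨⟨har, hbS⟩, hCS hvS, hCS hbS⟩), fun hv => absurd hv hvS,
          fun hv => absurd hv hvS⟩

lemma main_bwd (hG : G.IsCG) {j : V} (hiD : i ∉ C ∪ C₁) (hjD : j ∉ C ∪ C₁)
    (h : AltCon G (C ∪ C₁) i j) : AltCon (G.alphaCond C) C₁ i j := by
  have qb'_conc : ∀ {x}, Qb' G C C₁ i x → LA (G.alphaCond C) C₁ x j →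
      AltCon (G.alphaCond C) C₁ i j := by
    rintro x (h | ⟨m, hr, hla⟩) hxj
    · exact Or.inl (h.trans hxj)
    · exact Or.inr ⟨m, false, hr, hla.trans hxj⟩
  rcases h with hla | ⟨v, d, hr, hla⟩
  · exact Or.inl (la_to_la' hG hla)
  · have hvD : v ∉ C ∪ C₁ := hla.1
    have hphi := phi hG hiD hr
    by_cases hvS : v ∈ Sset G C
    · cases d with
      | true =>
        obtain ⟨u, huS, huD, hQu, huv⟩ := hphi.2.1 hvS rfl
        have hline : (G.alphaCond C).line u v := (alphaCond_line hG).2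
          ⟨Or.inr (Or.inl ⟨huv, hvS⟩), fun hcc => huD (Or.inl hcc),
            fun hcc => hvD (Or.inl hcc)⟩
        exact qb'_conc (hQu.extend ⟨fun hcc => huD (Or.inr hcc),
          ReflTransGen.single ⟨hline, fun hcc => hvD (Or.inr hcc)⟩⟩)
          (la_to_la' hG hla)
      | false =>
        exact qb'_conc (hphi.2.2 hvS rfl hvD) (la_to_la' hG hla)
    · exact Or.inr ⟨v, d, hphi.1 hvS, la_to_la' hG hla⟩

end Backward

/-- The conditioning algorithm generates chain graphs from chain graphs; consequently
the class of chain graphs with the LWF Markov property is stable under conditioning. -/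
theorem stmt10 (G : MixedGraph V) (hG : G.IsCG) (C : Set V) (hC : C ⊆ G.nodes) :
    (G.alphaCond C).IsCG ∧
    ∀ A B C₁ : Set V, A ⊆ G.nodes → B ⊆ G.nodes → C₁ ⊆ G.nodes →
      Disjoint A B → Disjoint A C → Disjoint A C₁ →
      Disjoint B C → Disjoint B C₁ → Disjoint C C₁ →
      ((G.alphaCond C).cSep A B C₁ ↔ G.cSep A B (C ∪ C₁)) := by
  refine ⟨alphaCond_isCG hG C, ?_⟩
  intro A B C₁ hA hB hC₁ hAB hAC hAC₁ hBC hBC₁ hCC₁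
  have hG' : (G.alphaCond C).IsCG := alphaCond_isCG hG C
  have hiff : ∀ i j : V, i ∉ C ∪ C₁ → j ∉ C ∪ C₁ →
      ((G.alphaCond C).cConnect i j C₁ ↔ G.cConnect i j (C ∪ C₁)) := by
    intro i j hiD hjD
    rw [cConnect_iff_suf hG'.noarc i j, cConnect_iff_suf hG.noarc i j,
      suf_iff_altCon, suf_iff_altCon]
    exact ⟨main_fwd hG hiD, main_bwd hG hiD hjD⟩
  constructor
  · intro h i hi j hj hcon
    have hiD : i ∉ C ∪ C₁ := by
      rintro (hc | hc)
      · exact Set.disjoint_left.1 hAC hi hc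
      · exact Set.disjoint_left.1 hAC₁ hi hc
    have hjD : j ∉ C ∪ C₁ := by
      rintro (hc | hc)
      · exact Set.disjoint_left.1 hBC hj hc
      · exact Set.disjoint_left.1 hBC₁ hj hc
    exact h i hi j hj ((hiff i j hiD hjD).2 hcon)
  · intro h i hi j hj hcon
    have hiD : i ∉ C ∪ C₁ := by
      rintro (hc | hc)
      · exact Set.disjoint_left.1 hAC hi hc
      · exact Set.disjoint_left.1 hAC₁ hi hc
    have hjD : j ∉ C ∪ C₁ := by
      rintro (hc | hc)
      · exact Set.disjoint_left.1 hBC hj hc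
      · exact Set.disjoint_left.1 hBC₁ hj hc
    exact h i hi j hj ((hiff i j hiD hjD).1 hcon)

end LWF
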